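/- arXiv:1304.7466 — 3 statements merged into one kernel-verified Lean document; each statement's English description precedes it below -/
import Mathlib

section
/- A graded functor (φ, F) : (𝒱, 𝔟) → (𝒰, 𝔞) between map-graded categories is cartesian with respect to the forgetful functor Ψ_1 : Map → Mas if and only if for every v : V → V' in 𝒱, B ∈ 𝔟_V, B' ∈ 𝔟_{V'}, the map 𝔟_v(B,B') → 𝔞_{φ(v)}(F(B), F(B')) is an isomorphism of k-modules, i.e. if and only if (φ, F) is subcartesian. -/
open CategoryTheory

universe u

namespace MapGr

variable (k : Type u) [CommRing k]

/-- A (`k`-linear) map-graded category `(𝒰, 𝔞)`: a set `𝔞_U` of objects over every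
`U ∈ 𝒰`, a `k`-module `𝔞_u(B, A)` of morphisms over every `u : U ⟶ U'` in `𝒰`, together
with associative, unital, `k`-bilinear composition maps. -/
structure GradedCat (𝒰 : Type u) [Category.{u} 𝒰] : Type (u + 1) where
  Obj : 𝒰 → Type u
  Hom : ∀ {X Y : 𝒰}, (X ⟶ Y) → Obj X → Obj Y → ModuleCat.{u} k
  comp : ∀ {X Y Z : 𝒰} {f : Y ⟶ Z} {g : X ⟶ Y} {C : Obj X} {B : Obj Y} {A : Obj Z},
    Hom f B A → Hom g C B → Hom (g ≫ f) C A
  id : ∀ {X : 𝒰} (A : Obj X), Hom (𝟙 X) A A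
  comp_add_left : ∀ {X Y Z : 𝒰} {f : Y ⟶ Z} {g : X ⟶ Y} {C : Obj X} {B : Obj Y}
    {A : Obj Z} (x x' : Hom f B A) (y : Hom g C B),
    comp (x + x') y = comp x y + comp x' y
  comp_add_right : ∀ {X Y Z : 𝒰} {f : Y ⟶ Z} {g : X ⟶ Y} {C : Obj X} {B : Obj Y}
    {A : Obj Z} (x : Hom f B A) (y y' : Hom g C B),
    comp x (y + y') = comp x y + comp x y'
  comp_smul_left : ∀ {X Y Z : 𝒰} {f : Y ⟶ Z} {g : X ⟶ Y} {C : Obj X} {B : Obj Y}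
    {A : Obj Z} (r : k) (x : Hom f B A) (y : Hom g C B),
    comp (r • x) y = r • comp x y
  comp_smul_right : ∀ {X Y Z : 𝒰} {f : Y ⟶ Z} {g : X ⟶ Y} {C : Obj X} {B : Obj Y}
    {A : Obj Z} (r : k) (x : Hom f B A) (y : Hom g C B),
    comp x (r • y) = r • comp x y
  comp_id : ∀ {X Y : 𝒰} {f : X ⟶ Y} {B : Obj X} {A : Obj Y} (x : Hom f B A),
    HEq (comp x (id B)) x
  id_comp : ∀ {X Y : 𝒰} {f : X ⟶ Y} {B : Obj X} {A : Obj Y} (x : Hom f B A),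
    HEq (comp (id A) x) x
  assoc : ∀ {W X Y Z : 𝒰} {f : Y ⟶ Z} {g : X ⟶ Y} {h : W ⟶ X} {D : Obj W} {C : Obj X}
    {B : Obj Y} {A : Obj Z} (x : Hom f B A) (y : Hom g C B) (z : Hom h D C),
    HEq (comp (comp x y) z) (comp x (comp y z))

variable {k}
variable {𝒰 : Type u} [Category.{u} 𝒰]

namespace GradedCat

variable (𝔞 : GradedCat k 𝒰)

/-- Transport of graded morphisms along an equality of underlying morphisms of `𝒰`. -/
def Hcast {X Y : 𝒰} {f g : X ⟶ Y} (h : f = g) {B : 𝔞.Obj X} {A : 𝔞.Obj Y}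
    (x : 𝔞.Hom f B A) : 𝔞.Hom g B A :=
  _root_.cast (by rw [h]) x

theorem Hcast_heq {X Y : 𝒰} {f g : X ⟶ Y} (h : f = g) {B : 𝔞.Obj X} {A : 𝔞.Obj Y}
    (x : 𝔞.Hom f B A) : HEq (𝔞.Hcast h x) x :=
  cast_heq _ _

theorem Hcast_add {X Y : 𝒰} {f g : X ⟶ Y} (h : f = g) {B : 𝔞.Obj X} {A : 𝔞.Obj Y}
    (x y : 𝔞.Hom f B A) : 𝔞.Hcast h (x + y) = 𝔞.Hcast h x + 𝔞.Hcast h y := by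
  subst h; rfl

theorem Hcast_smul {X Y : 𝒰} {f g : X ⟶ Y} (h : f = g) {B : 𝔞.Obj X} {A : 𝔞.Obj Y}
    (r : k) (x : 𝔞.Hom f B A) : 𝔞.Hcast h (r • x) = r • 𝔞.Hcast h x := by
  subst h; rfl

theorem comp_congr {X Y Z : 𝒰} {f f' : Y ⟶ Z} (hf : f = f') {g g' : X ⟶ Y} (hg : g = g')
    {C : 𝔞.Obj X} {B : 𝔞.Obj Y} {A : 𝔞.Obj Z} {x : 𝔞.Hom f B A} {x' : 𝔞.Hom f' B A}
    (hx : HEq x x') {y : 𝔞.Hom g C B} {y' : 𝔞.Hom g' C B} (hy : HEq y y') :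
    HEq (𝔞.comp x y) (𝔞.comp x' y') := by
  subst hf; subst hg; rw [eq_of_heq hx, eq_of_heq hy]

end GradedCat

variable {𝒱 : Type u} [Category.{u} 𝒱]

/-- The `𝒱`-graded category `𝔞^φ` obtained by restricting a `𝒰`-graded category `𝔞`
along a functor `φ : 𝒱 ⥤ 𝒰`:  `(𝔞^φ)_V = 𝔞_{φ V}` and `(𝔞^φ)_v(A, A') = 𝔞_{φ v}(A, A')`. -/
def GradedCat.restrict (φ : 𝒱 ⥤ 𝒰) (𝔞 : GradedCat k 𝒰) : GradedCat k 𝒱 where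
  Obj V := 𝔞.Obj (φ.obj V)
  Hom f B A := 𝔞.Hom (φ.map f) B A
  comp x y := 𝔞.Hcast (φ.map_comp _ _).symm (𝔞.comp x y)
  id A := 𝔞.Hcast (φ.map_id _).symm (𝔞.id A)
  comp_add_left x x' y := by (try dsimp only); rw [𝔞.comp_add_left, 𝔞.Hcast_add]
  comp_add_right x y y' := by (try dsimp only); rw [𝔞.comp_add_right, 𝔞.Hcast_add]
  comp_smul_left r x y := by (try dsimp only); rw [𝔞.comp_smul_left, 𝔞.Hcast_smul]
  comp_smul_right r x y := by (try dsimp only); rw [𝔞.comp_smul_right, 𝔞.Hcast_smul]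
  comp_id x :=
    ((𝔞.Hcast_heq _ _).trans
      ((𝔞.comp_congr rfl (φ.map_id _) HEq.rfl (𝔞.Hcast_heq _ _)).trans (𝔞.comp_id _)))
  id_comp x :=
    ((𝔞.Hcast_heq _ _).trans
      ((𝔞.comp_congr (φ.map_id _) rfl (𝔞.Hcast_heq _ _) HEq.rfl).trans (𝔞.id_comp _)))
  assoc x y z := by
    refine ((𝔞.Hcast_heq _ _).trans ?_).trans (𝔞.Hcast_heq _ _).symm
    refine ((𝔞.comp_congr (φ.map_comp _ _) rfl (𝔞.Hcast_heq _ _) HEq.rfl).trans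
      (𝔞.assoc _ _ _)).trans ?_
    exact 𝔞.comp_congr rfl (φ.map_comp _ _).symm HEq.rfl (𝔞.Hcast_heq _ _).symm

variable (k)

/-- A graded functor `(φ, F) : (𝒱, 𝔟) → (𝒰, 𝔞)` over a functor `φ : 𝒱 ⥤ 𝒰`: maps
`F_V : 𝔟_V → 𝔞_{φ V}` on objects and `k`-linear maps `𝔟_v(B, B') → 𝔞_{φ v}(F B, F B')`
on graded morphisms, preserving composition and identities. -/
structure GradedFunctor (φ : 𝒱 ⥤ 𝒰) (𝔟 : GradedCat k 𝒱) (𝔞 : GradedCat k 𝒰) :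
    Type u where
  obj : ∀ {V : 𝒱}, 𝔟.Obj V → 𝔞.Obj (φ.obj V)
  map : ∀ {V V' : 𝒱} (f : V ⟶ V') {B : 𝔟.Obj V} {B' : 𝔟.Obj V'},
    𝔟.Hom f B B' → 𝔞.Hom (φ.map f) (obj B) (obj B')
  map_add : ∀ {V V' : 𝒱} (f : V ⟶ V') {B : 𝔟.Obj V} {B' : 𝔟.Obj V'}
    (x y : 𝔟.Hom f B B'), map f (x + y) = map f x + map f y
  map_smul : ∀ {V V' : 𝒱} (f : V ⟶ V') {B : 𝔟.Obj V} {B' : 𝔟.Obj V'} (r : k)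
    (x : 𝔟.Hom f B B'), map f (r • x) = r • map f x
  map_id : ∀ {V : 𝒱} (B : 𝔟.Obj V), HEq (map (𝟙 V) (𝔟.id B)) (𝔞.id (obj B))
  map_comp : ∀ {V V' V'' : 𝒱} {f : V' ⟶ V''} {g : V ⟶ V'} {C : 𝔟.Obj V} {B : 𝔟.Obj V'}
    {A : 𝔟.Obj V''} (x : 𝔟.Hom f B A) (y : 𝔟.Hom g C B),
    HEq (map (g ≫ f) (𝔟.comp x y)) (𝔞.comp (map f x) (map g y))

variable {k}

namespace GradedFunctor

variable {φ : 𝒱 ⥤ 𝒰} {𝔟 : GradedCat k 𝒱} {𝔞 : GradedCat k 𝒰}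

theorem map_congr (F : GradedFunctor k φ 𝔟 𝔞) {V V' : 𝒱} {f g : V ⟶ V'} (hfg : f = g)
    {B : 𝔟.Obj V} {B' : 𝔟.Obj V'} {x : 𝔟.Hom f B B'} {y : 𝔟.Hom g B B'} (h : HEq x y) :
    HEq (F.map f x) (F.map g y) := by
  subst hfg; rw [eq_of_heq h]

/-- A graded functor is subcartesian (cartesian with respect to `Map → Mas`) iff all its
maps between graded `Hom`-modules are bijective. -/
def Subcartesian (F : GradedFunctor k φ 𝔟 𝔞) : Prop :=
  ∀ {V V' : 𝒱} (f : V ⟶ V') (B : 𝔟.Obj V) (B' : 𝔟.Obj V'),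
    Function.Bijective (fun x : 𝔟.Hom f B B' => F.map f x)

variable {𝒲 : Type u} [Category.{u} 𝒲] {ψ : 𝒲 ⥤ 𝒱} {𝔠 : GradedCat k 𝒲}

/-- Composition of graded functors. -/
def comp (F : GradedFunctor k φ 𝔟 𝔞) (G : GradedFunctor k ψ 𝔠 𝔟) :
    GradedFunctor k (ψ ⋙ φ) 𝔠 𝔞 where
  obj C := F.obj (G.obj C)
  map := fun {V V'} f {B B'} x => F.map (ψ.map f) (G.map f x)
  map_add := by intro V V' f B B' x y; (try dsimp only); rw [G.map_add, F.map_add]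
  map_smul := by intro V V' f B B' r x; (try dsimp only); rw [G.map_smul, F.map_smul]
  map_id B := (F.map_congr (ψ.map_id _) (G.map_id _)).trans (F.map_id _)
  map_comp x y := (F.map_congr (ψ.map_comp _ _) (G.map_comp _ _)).trans (F.map_comp _ _)

end GradedFunctor

/-- The canonical cartesian graded functor `δ^{φ,𝔞} : (𝒱, 𝔞^φ) → (𝒰, 𝔞)`. -/
def restrictProj (φ : 𝒱 ⥤ 𝒰) (𝔞 : GradedCat k 𝒰) :
    GradedFunctor k φ (𝔞.restrict φ) 𝔞 where
  obj A := A
  map := fun {V V'} _f {B B'} x => x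
  map_add := by intros; rfl
  map_smul := by intros; rfl
  map_id B := 𝔞.Hcast_heq (φ.map_id _).symm (𝔞.id B)
  map_comp x y := 𝔞.Hcast_heq (φ.map_comp _ _).symm (𝔞.comp x y)

theorem restrictProj_subcartesian (φ : 𝒱 ⥤ 𝒰) (𝔞 : GradedCat k 𝒰) :
    (restrictProj φ 𝔞).Subcartesian := by
  intro V V' f B B'
  constructor
  · intro a b h
    exact h
  · intro y
    exact ⟨y, rfl⟩

end MapGr

namespace MapGr

variable {k : Type u} [CommRing k]
variable {𝒱 𝒰 : Type u} [Category.{u} 𝒱] [Category.{u} 𝒰]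

/-- A graded functor `(φ, F) : (𝒱, 𝔟) → (𝒰, 𝔞)` is cartesian with respect to the
forgetful functor `Ψ₁ : Map → Mas` iff for every map-graded category `(𝒲, 𝔠)` and every
morphism of the underlying map-graded sets (a functor `ψ : 𝒲 ⥤ 𝒱` together with object
maps `o_W : 𝔠_W → 𝔟_{ψ W}`), composition with `(φ, F)` is a bijection from the graded
functors `(𝒲, 𝔠) → (𝒱, 𝔟)` lying over `(ψ, o)` to the graded functors
`(𝒲, 𝔠) → (𝒰, 𝔞)` lying over the composite morphism of map-graded sets. -/
def CartesianWrtMas {φ : 𝒱 ⥤ 𝒰} {𝔟 : GradedCat k 𝒱} {𝔞 : GradedCat k 𝒰}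
    (F : GradedFunctor k φ 𝔟 𝔞) : Prop :=
  ∀ (𝒲 : Type u) [Category.{u} 𝒲] (𝔠 : GradedCat k 𝒲) (ψ : 𝒲 ⥤ 𝒱)
    (o : ∀ W : 𝒲, 𝔠.Obj W → 𝔟.Obj (ψ.obj W)),
    Function.Bijective
      (fun G : { G : GradedFunctor k ψ 𝔠 𝔟 // ∀ (W : 𝒲) (C : 𝔠.Obj W), G.obj C = o W C } =>
        (⟨F.comp G.1, fun W C => congrArg (fun B => F.obj B) (G.2 W C)⟩ :
          { H : GradedFunctor k (ψ ⋙ φ) 𝔠 𝔞 //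
            ∀ (W : 𝒲) (C : 𝔠.Obj W), H.obj C = F.obj (o W C) }))


/-! ### Auxiliary machinery -/

/-- Extensionality for graded functors. -/
theorem GradedFunctor.ext' {ψ : 𝒱 ⥤ 𝒰} {𝔠 : GradedCat k 𝒱} {𝔟 : GradedCat k 𝒰}
    {G₁ G₂ : GradedFunctor k ψ 𝔠 𝔟}
    (hobj : ∀ (W : 𝒱) (C : 𝔠.Obj W), G₁.obj C = G₂.obj C)
    (hmap : ∀ (W W' : 𝒱) (f : W ⟶ W') (B : 𝔠.Obj W) (B' : 𝔠.Obj W') (x : 𝔠.Hom f B B'),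
      HEq (G₁.map f x) (G₂.map f x)) : G₁ = G₂ := by
  obtain ⟨o₁, m₁, _, _, _, _⟩ := G₁
  obtain ⟨o₂, m₂, _, _, _, _⟩ := G₂
  have ho : @o₁ = @o₂ := by funext W C; exact hobj W C
  subst ho
  have hm : @m₁ = @m₂ := by
    funext W W' f B B' x
    exact eq_of_heq (hmap W W' f B B' x)
  subst hm
  rfl

/-- Cast along an equality of `ModuleCat`s. -/
def mcast {M N : ModuleCat.{u} k} (h : M = N) (x : M) : N := h ▸ x

theorem mcast_heq {M N : ModuleCat.{u} k} (h : M = N) (x : M) : HEq (mcast h x) x := by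
  subst h; rfl

theorem mcast_add {M N : ModuleCat.{u} k} (h : M = N) (x y : M) :
    mcast h (x + y) = mcast h x + mcast h y := by subst h; rfl

theorem mcast_smul {M N : ModuleCat.{u} k} (h : M = N) (r : k) (x : M) :
    mcast h (r • x) = r • mcast h x := by subst h; rfl

theorem GradedCat.heq_smul (𝔟 : GradedCat k 𝒱) {X Y : 𝒱} {f g : X ⟶ Y} (hfg : f = g)
    {B : 𝔟.Obj X} {A : 𝔟.Obj Y} (r : k) {x : 𝔟.Hom f B A} {y : 𝔟.Hom g B A}
    (h : HEq x y) : HEq (r • x) (r • y) := by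
  subst hfg; rw [eq_of_heq h]

theorem GradedCat.comp_congr' (𝔞 : GradedCat k 𝒱) {X Y Z : 𝒱} {f f' : Y ⟶ Z}
    (hf : f = f') {g g' : X ⟶ Y} (hg : g = g') {C C' : 𝔞.Obj X} (hC : C = C')
    {B B' : 𝔞.Obj Y} (hB : B = B') {A A' : 𝔞.Obj Z} (hA : A = A')
    {x : 𝔞.Hom f B A} {x' : 𝔞.Hom f' B' A'} (hx : HEq x x')
    {y : 𝔞.Hom g C B} {y' : 𝔞.Hom g' C' B'} (hy : HEq y y') :
    HEq (𝔞.comp x y) (𝔞.comp x' y') := by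
  subst hf; subst hg; subst hC; subst hB; subst hA
  rw [eq_of_heq hx, eq_of_heq hy]

theorem smul_comp_id (𝔟 : GradedCat k 𝒱) {X Y : 𝒱} {f : X ⟶ Y} {B : 𝔟.Obj X}
    {A : 𝔟.Obj Y} (x : 𝔟.Hom f B A) (r s : k) :
    HEq ((r * s) • x) (𝔟.comp (r • x) (s • 𝔟.id B)) := by
  have h1 : 𝔟.comp (r • x) (s • 𝔟.id B) = (r * s) • 𝔟.comp x (𝔟.id B) := by
    rw [𝔟.comp_smul_left, 𝔟.comp_smul_right, smul_smul]
  rw [h1]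
  exact 𝔟.heq_smul (by simp) (r * s) (𝔟.comp_id x).symm

theorem smul_id_comp (𝔟 : GradedCat k 𝒱) {X Y : 𝒱} {f : X ⟶ Y} {B : 𝔟.Obj X}
    {A : 𝔟.Obj Y} (x : 𝔟.Hom f B A) (r s : k) :
    HEq ((r * s) • x) (𝔟.comp (r • 𝔟.id A) (s • x)) := by
  have h1 : 𝔟.comp (r • 𝔟.id A) (s • x) = (r * s) • 𝔟.comp (𝔟.id A) x := by
    rw [𝔟.comp_smul_left, 𝔟.comp_smul_right, smul_smul]
  rw [h1]
  exact 𝔟.heq_smul (by simp) (r * s) (𝔟.id_comp x).symm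

theorem smul_comp_id' (𝔟 : GradedCat k 𝒱) {X Y : 𝒱} {f : X ⟶ Y} {i : X ⟶ X}
    (hi : i = 𝟙 X) {B : 𝔟.Obj X} {A : 𝔟.Obj Y} (x : 𝔟.Hom f B A) {e : 𝔟.Hom i B B}
    (he : HEq e (𝔟.id B)) (r s : k) :
    HEq ((r * s) • x) (𝔟.comp (r • x) (s • e)) := by
  refine (smul_comp_id 𝔟 x r s).trans ?_
  exact (𝔟.comp_congr rfl hi HEq.rfl (𝔟.heq_smul hi s he)).symm

theorem smul_id_comp' (𝔟 : GradedCat k 𝒱) {X Y : 𝒱} {f : X ⟶ Y} {i : Y ⟶ Y}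
    (hi : i = 𝟙 Y) {B : 𝔟.Obj X} {A : 𝔟.Obj Y} (x : 𝔟.Hom f B A) {e : 𝔟.Hom i A A}
    (he : HEq e (𝔟.id A)) (r s : k) :
    HEq ((r * s) • x) (𝔟.comp (r • e) (s • x)) := by
  refine (smul_id_comp 𝔟 x r s).trans ?_
  exact (𝔟.comp_congr hi rfl (𝔟.heq_smul hi r he) HEq.rfl).symm

theorem GradedFunctor.map_heq {φ : 𝒱 ⥤ 𝒰} {𝔟 : GradedCat k 𝒱} {𝔞 : GradedCat k 𝒰}
    (F : GradedFunctor k φ 𝔟 𝔞) {V V' : 𝒱} (f : V ⟶ V') {B₁ B₂ : 𝔟.Obj V}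
    (hB : B₁ = B₂) {B₁' B₂' : 𝔟.Obj V'} (hB' : B₁' = B₂') {x : 𝔟.Hom f B₁ B₁'}
    {y : 𝔟.Hom f B₂ B₂'} (hxy : HEq x y) : HEq (F.map f x) (F.map f y) := by
  subst hB; subst hB'; rw [eq_of_heq hxy]

theorem sub_inj_heq {φ : 𝒱 ⥤ 𝒰} {𝔟 : GradedCat k 𝒱} {𝔞 : GradedCat k 𝒰}
    (F : GradedFunctor k φ 𝔟 𝔞) (hsub : F.Subcartesian) {V V' : 𝒱} {f g : V ⟶ V'}
    (hfg : f = g) {B₁ B₂ : 𝔟.Obj V} (hB : B₁ = B₂) {B₁' B₂' : 𝔟.Obj V'}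
    (hB' : B₁' = B₂') {x : 𝔟.Hom f B₁ B₁'} {y : 𝔟.Hom g B₂ B₂'}
    (h : HEq (F.map f x) (F.map g y)) : HEq x y := by
  subst hfg; subst hB; subst hB'
  exact heq_of_eq ((hsub f _ _).injective (eq_of_heq h))

/-- Inverse of the hom-maps of a subcartesian graded functor. -/
noncomputable def Finv {φ : 𝒱 ⥤ 𝒰} {𝔟 : GradedCat k 𝒱} {𝔞 : GradedCat k 𝒰}
    (F : GradedFunctor k φ 𝔟 𝔞) (hsub : F.Subcartesian) {V V' : 𝒱} (f : V ⟶ V')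
    (B : 𝔟.Obj V) (B' : 𝔟.Obj V') (y : 𝔞.Hom (φ.map f) (F.obj B) (F.obj B')) :
    𝔟.Hom f B B' :=
  (Equiv.ofBijective _ (hsub f B B')).symm y

theorem Finv_spec {φ : 𝒱 ⥤ 𝒰} {𝔟 : GradedCat k 𝒱} {𝔞 : GradedCat k 𝒰}
    (F : GradedFunctor k φ 𝔟 𝔞) (hsub : F.Subcartesian) {V V' : 𝒱} (f : V ⟶ V')
    (B : 𝔟.Obj V) (B' : 𝔟.Obj V') (y : 𝔞.Hom (φ.map f) (F.obj B) (F.obj B')) :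
    F.map f (Finv F hsub f B B' y) = y :=
  (Equiv.ofBijective _ (hsub f B B')).apply_symm_apply y

theorem Finv_add {φ : 𝒱 ⥤ 𝒰} {𝔟 : GradedCat k 𝒱} {𝔞 : GradedCat k 𝒰}
    (F : GradedFunctor k φ 𝔟 𝔞) (hsub : F.Subcartesian) {V V' : 𝒱} (f : V ⟶ V')
    (B : 𝔟.Obj V) (B' : 𝔟.Obj V') (y z : 𝔞.Hom (φ.map f) (F.obj B) (F.obj B')) :
    Finv F hsub f B B' (y + z) = Finv F hsub f B B' y + Finv F hsub f B B' z := by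
  apply (hsub f B B').injective
  show F.map f _ = F.map f _
  rw [Finv_spec, F.map_add, Finv_spec, Finv_spec]

theorem Finv_smul {φ : 𝒱 ⥤ 𝒰} {𝔟 : GradedCat k 𝒱} {𝔞 : GradedCat k 𝒰}
    (F : GradedFunctor k φ 𝔟 𝔞) (hsub : F.Subcartesian) {V V' : 𝒱} (f : V ⟶ V')
    (B : 𝔟.Obj V) (B' : 𝔟.Obj V') (r : k) (y : 𝔞.Hom (φ.map f) (F.obj B) (F.obj B')) :
    Finv F hsub f B B' (r • y) = r • Finv F hsub f B B' y := by
  apply (hsub f B B').injective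
  show F.map f _ = F.map f _
  rw [Finv_spec, F.map_smul, Finv_spec]

/-- The inverse graded functor lifting `H` through a subcartesian `F`. -/
noncomputable def Gback {φ : 𝒱 ⥤ 𝒰} {𝔟 : GradedCat k 𝒱} {𝔞 : GradedCat k 𝒰}
    (F : GradedFunctor k φ 𝔟 𝔞) (hsub : F.Subcartesian) {𝒲 : Type u} [Category.{u} 𝒲]
    {𝔠 : GradedCat k 𝒲} {ψ : 𝒲 ⥤ 𝒱} (o : ∀ W : 𝒲, 𝔠.Obj W → 𝔟.Obj (ψ.obj W))
    (H : GradedFunctor k (ψ ⋙ φ) 𝔠 𝔞)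
    (hH : ∀ (W : 𝒲) (C : 𝔠.Obj W), H.obj C = F.obj (o W C)) :
    GradedFunctor k ψ 𝔠 𝔟 where
  obj {W} C := o W C
  map {W W'} g {C C'} x :=
    Finv F hsub (ψ.map g) (o W C) (o W' C')
      (mcast (by rw [hH W C, hH W' C']; rfl) (H.map g x))
  map_add {W W'} g {C C'} x y := by
    (try dsimp only)
    rw [H.map_add, mcast_add, Finv_add]
  map_smul {W W'} g {C C'} r x := by
    (try dsimp only)
    rw [H.map_smul, mcast_smul, Finv_smul]
  map_id {W} C := by
    refine sub_inj_heq F hsub (ψ.map_id W) rfl rfl ?_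
    rw [Finv_spec]
    refine ((mcast_heq _ _).trans (H.map_id C)).trans ?_
    rw [hH W C]
    exact (F.map_id (o W C)).symm
  map_comp {W W' W''} {g : W' ⟶ W''} {g' : W ⟶ W'} {C B A} x y := by
    refine sub_inj_heq F hsub (ψ.map_comp g' g) rfl rfl ?_
    rw [Finv_spec]
    refine ((mcast_heq _ _).trans (H.map_comp x y)).trans ?_
    refine HEq.trans ?_ (F.map_comp (Finv F hsub (ψ.map g) _ _ _)
      (Finv F hsub (ψ.map g') _ _ _)).symm
    refine 𝔞.comp_congr' rfl rfl (hH W C) (hH W' B) (hH W'' A) ?_ ?_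
    · rw [Finv_spec]; exact (mcast_heq _ _).symm
    · rw [Finv_spec]; exact (mcast_heq _ _).symm

/-! ### The walking arrow test category -/

/-- The walking arrow. -/
abbrev W2 : Type u := ULift.{u} Bool

noncomputable instance W2cat : Category.{u} (W2.{u}) := Preorder.smallCategory _

/-- The unique non-identity arrow of `W2`. -/
noncomputable def uarr : (⟨false⟩ : W2.{u}) ⟶ ⟨true⟩ := homOfLE (by simp)

/-- The functor `W2 ⥤ 𝒱` picking out `f`. -/
noncomputable def ψW {V V' : 𝒱} (f : V ⟶ V') : W2.{u} ⥤ 𝒱 where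
  obj a := match a with
    | ⟨false⟩ => V
    | ⟨true⟩ => V'
  map {a b} h := match a, b, h with
    | ⟨false⟩, ⟨false⟩, _ => 𝟙 V
    | ⟨false⟩, ⟨true⟩, _ => f
    | ⟨true⟩, ⟨true⟩, _ => 𝟙 V'
    | ⟨true⟩, ⟨false⟩, h => absurd (leOfHom h) (by decide)
  map_id a := by obtain ⟨_ | _⟩ := a <;> rfl
  map_comp {a b c} g h := by
    obtain ⟨_ | _⟩ := a <;> obtain ⟨_ | _⟩ := b <;> obtain ⟨_ | _⟩ := c <;>
      first
      | exact absurd (leOfHom g) (by decide)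
      | exact absurd (leOfHom h) (by decide)
      | simp

/-- The map-graded category over `W2` with a free rank-one module over the arrow. -/
noncomputable def cW (k : Type u) [CommRing k] : GradedCat k (W2.{u}) where
  Obj _ := PUnit
  Hom _ _ _ := ModuleCat.of k k
  comp x y := (show k from x) * (show k from y)
  id _ := (1 : k)
  comp_add_left x x' y := add_mul (show k from x) (show k from x') (show k from y)
  comp_add_right x y y' := mul_add (show k from x) (show k from y) (show k from y')
  comp_smul_left r x y := smul_mul_assoc r (show k from x) (show k from y)
  comp_smul_right r x y := mul_smul_comm r (show k from x) (show k from y)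
  comp_id x := heq_of_eq (mul_one (show k from x))
  id_comp x := heq_of_eq (one_mul (show k from x))
  assoc x y z := heq_of_eq (mul_assoc (show k from x) (show k from y) (show k from z))

variable {𝔟 : GradedCat k 𝒱}

/-- The object map for graded functors out of `(W2, cW)`. -/
noncomputable def oW {V V' : 𝒱} {f : V ⟶ V'} (B : 𝔟.Obj V) (B' : 𝔟.Obj V') :
    ∀ a : W2.{u}, (cW k).Obj a → 𝔟.Obj ((ψW f).obj a) := fun a _ =>
  match a with
  | ⟨false⟩ => B
  | ⟨true⟩ => B'

/-- The graded functor `(W2, cW) → (𝒱, 𝔟)` determined by `x ∈ 𝔟_f(B, B')`. -/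
noncomputable def GW {V V' : 𝒱} {f : V ⟶ V'} {B : 𝔟.Obj V} {B' : 𝔟.Obj V'} (x₀ : 𝔟.Hom f B B') :
    GradedFunctor k (ψW f) (cW k) 𝔟 where
  obj {a} C := oW B B' a C
  map {a b} h {C C'} r := match a, b, h with
    | ⟨false⟩, ⟨false⟩, _ => (show k from r) • 𝔟.id B
    | ⟨false⟩, ⟨true⟩, _ => (show k from r) • x₀
    | ⟨true⟩, ⟨true⟩, _ => (show k from r) • 𝔟.id B'
    | ⟨true⟩, ⟨false⟩, h => absurd (leOfHom h) (by decide)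
  map_add {a b} h {C C'} r s := by
    obtain ⟨_ | _⟩ := a <;> obtain ⟨_ | _⟩ := b
    · exact add_smul (show k from r) (show k from s) (𝔟.id B)
    · exact add_smul (show k from r) (show k from s) x₀
    · exact absurd (leOfHom h) (by decide)
    · exact add_smul (show k from r) (show k from s) (𝔟.id B')
  map_smul {a b} h {C C'} r s := by
    obtain ⟨_ | _⟩ := a <;> obtain ⟨_ | _⟩ := b
    · exact smul_assoc r (show k from s) (𝔟.id B)
    · exact smul_assoc r (show k from s) x₀
    · exact absurd (leOfHom h) (by decide)
    · exact smul_assoc r (show k from s) (𝔟.id B')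
  map_id {a} C := by
    obtain ⟨_ | _⟩ := a
    · exact heq_of_eq (one_smul k (𝔟.id B))
    · exact heq_of_eq (one_smul k (𝔟.id B'))
  map_comp {a b c} {g} {g'} {C B₁ A} r s := by
    obtain ⟨_ | _⟩ := a <;> obtain ⟨_ | _⟩ := b <;> obtain ⟨_ | _⟩ := c
    · exact smul_comp_id' 𝔟 rfl (𝔟.id B) HEq.rfl (show k from r) (show k from s)
    · exact smul_comp_id' 𝔟 rfl x₀ HEq.rfl (show k from r) (show k from s)
    · exact absurd (leOfHom g) (by decide)
    · exact smul_id_comp' 𝔟 rfl x₀ HEq.rfl (show k from r) (show k from s)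
    · exact absurd (leOfHom g') (by decide)
    · exact absurd (leOfHom g') (by decide)
    · exact absurd (leOfHom g) (by decide)
    · exact smul_comp_id' 𝔟 rfl (𝔟.id B') HEq.rfl (show k from r) (show k from s)

variable {𝔞 : GradedCat k 𝒰}

/-- The graded functor `(W2, cW) → (𝒰, 𝔞)` over `ψW f ⋙ φ` determined by
`y ∈ 𝔞_{φ f}(A, A')`. -/
noncomputable def HW (φ : 𝒱 ⥤ 𝒰) {V V' : 𝒱} {f : V ⟶ V'} {A : 𝔞.Obj (φ.obj V)}
    {A' : 𝔞.Obj (φ.obj V')} (y : 𝔞.Hom (φ.map f) A A') :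
    GradedFunctor k (ψW f ⋙ φ) (cW k) 𝔞 where
  obj {a} C := match a with
    | ⟨false⟩ => A
    | ⟨true⟩ => A'
  map {a b} h {C C'} r := match a, b, h with
    | ⟨false⟩, ⟨false⟩, _ => (show k from r) • 𝔞.Hcast (φ.map_id V).symm (𝔞.id A)
    | ⟨false⟩, ⟨true⟩, _ => (show k from r) • y
    | ⟨true⟩, ⟨true⟩, _ => (show k from r) • 𝔞.Hcast (φ.map_id V').symm (𝔞.id A')
    | ⟨true⟩, ⟨false⟩, h => absurd (leOfHom h) (by decide)
  map_add {a b} h {C C'} r s := by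
    obtain ⟨_ | _⟩ := a <;> obtain ⟨_ | _⟩ := b
    · exact add_smul (show k from r) (show k from s) _
    · exact add_smul (show k from r) (show k from s) y
    · exact absurd (leOfHom h) (by decide)
    · exact add_smul (show k from r) (show k from s) _
  map_smul {a b} h {C C'} r s := by
    obtain ⟨_ | _⟩ := a <;> obtain ⟨_ | _⟩ := b
    · exact smul_assoc r (show k from s) (𝔞.Hcast (φ.map_id V).symm (𝔞.id A))
    · exact smul_assoc r (show k from s) y
    · exact absurd (leOfHom h) (by decide)
    · exact smul_assoc r (show k from s) (𝔞.Hcast (φ.map_id V').symm (𝔞.id A'))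
  map_id {a} C := by
    obtain ⟨_ | _⟩ := a
    · exact (heq_of_eq (one_smul k _)).trans (𝔞.Hcast_heq _ _)
    · exact (heq_of_eq (one_smul k _)).trans (𝔞.Hcast_heq _ _)
  map_comp {a b c} {g} {g'} {C B₁ A₁} r s := by
    obtain ⟨_ | _⟩ := a <;> obtain ⟨_ | _⟩ := b <;> obtain ⟨_ | _⟩ := c
    · exact smul_comp_id' 𝔞 (φ.map_id V) _ (𝔞.Hcast_heq _ _)
        (show k from r) (show k from s)
    · exact smul_comp_id' 𝔞 (φ.map_id V) y (𝔞.Hcast_heq _ _)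
        (show k from r) (show k from s)
    · exact absurd (leOfHom g) (by decide)
    · exact smul_id_comp' 𝔞 (φ.map_id V') y (𝔞.Hcast_heq _ _)
        (show k from r) (show k from s)
    · exact absurd (leOfHom g') (by decide)
    · exact absurd (leOfHom g') (by decide)
    · exact absurd (leOfHom g) (by decide)
    · exact smul_comp_id' 𝔞 (φ.map_id V') _ (𝔞.Hcast_heq _ _)
        (show k from r) (show k from s)

/-- A graded functor `(φ, F) : (𝒱, 𝔟) → (𝒰, 𝔞)` is cartesian with respect to the
forgetful functor `Ψ₁ : Map → Mas` if and only if every map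
`𝔟_v(B, B') → 𝔞_{φ v}(F B, F B')` is an isomorphism of `k`-modules, i.e. iff `(φ, F)` is
subcartesian. -/
theorem statement7 {φ : 𝒱 ⥤ 𝒰} {𝔟 : GradedCat k 𝒱} {𝔞 : GradedCat k 𝒰}
    (F : GradedFunctor k φ 𝔟 𝔞) :
    CartesianWrtMas F ↔ F.Subcartesian := by
  constructor
  · -- cartesian ⇒ subcartesian
    intro hc V V' f B B'
    constructor
    · intro x x' hxx
      have hGG : (⟨GW x, fun _ _ => rfl⟩ :
            { G : GradedFunctor k (ψW f) (cW k) 𝔟 //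
              ∀ (W : W2.{u}) (C : (cW k).Obj W), G.obj C = oW B B' W C }) =
          ⟨GW x', fun _ _ => rfl⟩ := by
        apply (hc W2 (cW k) (ψW f) (oW B B')).1
        apply Subtype.ext
        dsimp only
        apply GradedFunctor.ext'
        · intro W C; rfl
        · intro a b h C C' r
          obtain ⟨_ | _⟩ := a <;> obtain ⟨_ | _⟩ := b
          · exact HEq.rfl
          · have hxx' : F.map f x = F.map f x' := hxx
            refine heq_of_eq ?_
            show F.map f ((show k from r) • x) = F.map f ((show k from r) • x')
            rw [F.map_smul, F.map_smul, hxx']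
          · exact absurd (leOfHom h) (by decide)
          · exact HEq.rfl
      have h2 : GW x = GW (𝔟 := 𝔟) x' := congrArg Subtype.val hGG
      have h3 : HEq ((GW x).map uarr (B := PUnit.unit) (B' := PUnit.unit) (1 : k))
          ((GW (𝔟 := 𝔟) x').map uarr (B := PUnit.unit) (B' := PUnit.unit) (1 : k)) := by
        rw [h2]
      have h4 : (1 : k) • x = (1 : k) • x' := eq_of_heq h3
      rwa [one_smul, one_smul] at h4
    · intro y
      obtain ⟨⟨G, hG⟩, hFG⟩ := (hc W2 (cW k) (ψW f) (oW B B')).2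
        ⟨HW φ y, fun W C => by
          obtain ⟨_ | _⟩ := W <;> rfl⟩
      have hFG' : F.comp G = HW φ y := congrArg Subtype.val hFG
      have hB := hG ⟨false⟩ PUnit.unit
      have hB' := hG ⟨true⟩ PUnit.unit
      refine ⟨cast (by rw [hB, hB']; rfl) (G.map uarr (B := PUnit.unit) (B' := PUnit.unit)
        (1 : k)), ?_⟩
      apply eq_of_heq
      refine HEq.trans (F.map_heq f hB.symm hB'.symm
        (cast_heq _ (G.map uarr (B := PUnit.unit) (B' := PUnit.unit) (1 : k)))) ?_
      have key : HEq
          (F.map ((ψW f).map uarr) (G.map uarr (B := PUnit.unit) (B' := PUnit.unit) (1 : k)))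
          ((HW (𝔞 := 𝔞) φ y).map uarr (B := PUnit.unit) (B' := PUnit.unit) (1 : k)) := by
        rw [← hFG']
        exact HEq.rfl
      refine key.trans ?_
      exact heq_of_eq (one_smul k y)
  · -- subcartesian ⇒ cartesian
    intro hsub 𝒲 _ 𝔠 ψ o
    constructor
    · rintro ⟨G₁, h₁⟩ ⟨G₂, h₂⟩ h
      have h' : F.comp G₁ = F.comp G₂ := congrArg Subtype.val h
      apply Subtype.ext
      dsimp only
      apply GradedFunctor.ext'
      · intro W C; rw [h₁ W C, h₂ W C]
      · intro W W' g C C' x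
        refine sub_inj_heq F hsub rfl ((h₁ _ _).trans (h₂ _ _).symm)
          ((h₁ _ _).trans (h₂ _ _).symm) ?_
        show HEq ((F.comp G₁).map g x) ((F.comp G₂).map g x)
        rw [h']
    · rintro ⟨H, hH⟩
      refine ⟨⟨Gback F hsub o H hH, fun W C => rfl⟩, ?_⟩
      apply Subtype.ext
      dsimp only
      apply GradedFunctor.ext'
      · intro W C; exact (hH W C).symm
      · intro W W' g C C' x
        refine HEq.trans (heq_of_eq (Finv_spec F hsub (ψ.map g) (o W C) (o W' C')
          (mcast (by rw [hH W C, hH W' C']; rfl) (H.map g x)))) ?_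
        exact mcast_heq _ _

end MapGr
end

section
/- Let (φ_i : 𝒱_i → 𝒰)_{i∈I} be a family of functors between small categories that is jointly surjective on objects (a 0-cover). Write 𝒱_{ij} = 𝒱_i ×_𝒰 𝒱_j for the pairwise pullbacks with projections α_1, α_2, and similarly for triple pullbacks. Then: (a) for 𝒰-graded sets 𝔵, 𝔶, any family of graded-set morphisms F_i : 𝔶^{φ_i} → 𝔵^{φ_i} over the identity functors 1_{𝒱_i} satisfying (F_i)^{α_1} = (F_j)^{α_2} on every 𝒱_{ij} glues to a unique morphism F : 𝔶 → 𝔵 over 1_𝒰 with F^{φ_i} = F_i for all i; (b) every descent datum — a family of 𝒱_i-graded sets 𝔟_i together with isomorphisms ρ_{ij} : 𝔟_i^{α_1} ≅ 𝔟_j^{α_2} over 𝒱_{ij} satisfying the cocycle condition on triple pullbacks — is isomorphic to the descent datum (𝔵^{φ_i})_i of some 𝒰-graded set 𝔵. In other words, the fibered category Mas → Cat of map-graded sets is a stack for the pretopology of n-covers, for every n ≥ 0. -/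
open CategoryTheory

universe u

/-- Objects of the pullback `𝒱₁ ×_𝒰 𝒱₂` of two functors in the category of small
categories: pairs of objects with equal images in `𝒰`. -/
structure CatPB {𝒰 𝒱₁ 𝒱₂ : Type u} [SmallCategory 𝒰] [SmallCategory 𝒱₁]
    [SmallCategory 𝒱₂] (φ₁ : 𝒱₁ ⥤ 𝒰) (φ₂ : 𝒱₂ ⥤ 𝒰) : Type u where
  left : 𝒱₁
  right : 𝒱₂
  eq : φ₁.obj left = φ₂.obj right

/-- Let `(φᵢ : 𝒱ᵢ ⥤ 𝒰)` be a family of functors which is jointly surjective on objects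
(a `0`-cover, hence the relevant condition for an `n`-cover for every `n ≥ 0`).  Then:
(a) a compatible family of morphisms of graded sets `Fᵢ : 𝔶^{φᵢ} → 𝔵^{φᵢ}` over the
identity functors glues to a unique morphism `F : 𝔶 → 𝔵` over `1_𝒰`;
(b) every descent datum of graded sets — a family of `𝒱ᵢ`-graded sets `𝔟ᵢ` with
isomorphisms `ρᵢⱼ : 𝔟ᵢ^{α₁} ≅ 𝔟ⱼ^{α₂}` over the pairwise pullbacks satisfying the
cocycle condition on triple pullbacks — is isomorphic to the descent datum of
restrictions of some `𝒰`-graded set `𝔵`.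
In other words, the fibered category `Mas → Cat` of map-graded sets is a stack for the
pretopology of `n`-covers, for every `n ≥ 0`. -/
theorem statement8 {ι : Type u} {𝒰 : Type u} [SmallCategory 𝒰] (𝒱 : ι → Type u)
    [∀ i, SmallCategory (𝒱 i)] (φ : ∀ i, 𝒱 i ⥤ 𝒰)
    (hcov : ∀ U : 𝒰, ∃ i, ∃ V : 𝒱 i, (φ i).obj V = U) :
    -- (a) glueing of morphisms of graded sets
    (∀ (𝔵 𝔶 : 𝒰 → Type u)
      (F : ∀ (i : ι) (V : 𝒱 i), 𝔶 ((φ i).obj V) → 𝔵 ((φ i).obj V)),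
      (∀ (i j : ι) (P : CatPB (φ i) (φ j)) (y : 𝔶 ((φ i).obj P.left)),
        cast (congrArg 𝔵 P.eq) (F i P.left y) = F j P.right (cast (congrArg 𝔶 P.eq) y)) →
      ∃! G : ∀ U : 𝒰, 𝔶 U → 𝔵 U, ∀ (i : ι) (V : 𝒱 i), G ((φ i).obj V) = F i V) ∧
    -- (b) every descent datum of graded sets is effective
    (∀ (𝔟 : ∀ i : ι, 𝒱 i → Type u)
      (ρ : ∀ (i j : ι) (P : CatPB (φ i) (φ j)), 𝔟 i P.left ≃ 𝔟 j P.right),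
      (∀ (i j l : ι) (V₁ : 𝒱 i) (V₂ : 𝒱 j) (V₃ : 𝒱 l)
        (h₁₂ : (φ i).obj V₁ = (φ j).obj V₂) (h₂₃ : (φ j).obj V₂ = (φ l).obj V₃)
        (x : 𝔟 i V₁),
        ρ j l ⟨V₂, V₃, h₂₃⟩ (ρ i j ⟨V₁, V₂, h₁₂⟩ x) = ρ i l ⟨V₁, V₃, h₁₂.trans h₂₃⟩ x) →
      ∃ (𝔵 : 𝒰 → Type u) (σ : ∀ (i : ι) (V : 𝒱 i), 𝔟 i V ≃ 𝔵 ((φ i).obj V)),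
        ∀ (i j : ι) (P : CatPB (φ i) (φ j)) (x : 𝔟 i P.left),
          σ j P.right (ρ i j P x) = cast (congrArg 𝔵 P.eq) (σ i P.left x)) := by
  choose ci cV ch using hcov
  constructor
  · -- (a)
    intro 𝔵 𝔶 F hF
    refine ⟨fun U y =>
      cast (congrArg 𝔵 (ch U)) (F (ci U) (cV U) (cast (congrArg 𝔶 (ch U)).symm y)),
      ?_, ?_⟩
    · intro i V
      funext y
      have h := hF (ci ((φ i).obj V)) i ⟨cV _, V, ch _⟩
        (cast (congrArg 𝔶 (ch ((φ i).obj V))).symm y)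
      simpa [cast_cast] using h
    · intro G' hG'
      funext U y
      have h1 := hG' (ci U) (cV U)
      have key : ∀ (U' : 𝒰) (h : (φ (ci U)).obj (cV U) = U') (y : 𝔶 U'),
          G' U' y = cast (congrArg 𝔵 h)
            (F (ci U) (cV U) (cast (congrArg 𝔶 h).symm y)) := by
        intro U' h y'
        subst h
        simp [h1]
      exact key U (ch U) y
  · -- (b)
    intro 𝔟 ρ hcoc
    refine ⟨fun U => 𝔟 (ci U) (cV U),
      fun i V => ρ i (ci ((φ i).obj V)) ⟨V, cV _, (ch _).symm⟩, ?_⟩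
    intro i j P x
    obtain ⟨V, W, h⟩ := P
    have key : ∀ (U₂ : 𝒰) (h' : (φ i).obj V = U₂) (x : 𝔟 i V),
        ρ i (ci U₂) ⟨V, cV U₂, h'.trans (ch U₂).symm⟩ x
          = cast (congrArg (fun U => 𝔟 (ci U) (cV U)) h')
            (ρ i (ci ((φ i).obj V)) ⟨V, cV _, (ch _).symm⟩ x) := by
      intro U₂ h' x
      subst h'
      rfl
    have hc := hcoc i j (ci ((φ j).obj W)) V W (cV _) h ((ch _).symm) x
    simp only [hc]
    exact key _ h x
end

section
/- Fix n ∈ ℕ ∪ {∞} and endow the category of small categories with the pretopology of n-covers. For an n-cover (φ_i : 𝒱_i → 𝒰)_{i∈I}, consider the comparison functor sending a 𝒰-graded category 𝔞 to the descent datum of restrictions (𝔞^{φ_i})_i together with the canonical identifications over the pullbacks 𝒱_i ×_𝒰 𝒱_j. If n ≥ 2, this comparison functor is fully faithful for every n-cover (Map is a prestack over Cat); if n ≥ 3, it is an equivalence of categories for every n-cover (Map is a stack over Cat). -/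
open CategoryTheory

universe u

namespace MapGr

/-- Strings of `n` composable morphisms (the `n`-simplices of the simplicial nerve). -/
inductive Pth (C : Type u) [Category.{u} C] : ℕ → C → C → Type u
  | nil (X : C) : Pth C 0 X X
  | cons {n : ℕ} {X Y Z : C} (f : X ⟶ Y) (p : Pth C n Y Z) : Pth C (n + 1) X Z

/-- The map induced by a functor on simplices. -/
def Pth.map {C D : Type u} [Category.{u} C] [Category.{u} D] (F : C ⥤ D) :
    ∀ {n : ℕ} {X Y : C}, Pth C n X Y → Pth D n (F.obj X) (F.obj Y)
  | _, _, _, .nil X => .nil _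
  | _, _, _, .cons f p => .cons (F.map f) (p.map F)

/-- The set of `n`-simplices of the simplicial nerve of a category. -/
def NerveTot (C : Type u) [Category.{u} C] (m : ℕ) : Type u :=
  Σ (X : C) (Y : C), Pth C m X Y

/-- The map induced by a functor on the sets of `n`-simplices. -/
def NerveTot.map {C D : Type u} [Category.{u} C] [Category.{u} D] (F : C ⥤ D) {m : ℕ}
    (s : NerveTot C m) : NerveTot D m :=
  ⟨F.obj s.1, F.obj s.2.1, Pth.map F s.2.2⟩

variable {k : Type u} [CommRing k]
variable {𝒰 𝒱 𝒲 : Type u} [Category.{u} 𝒰] [Category.{u} 𝒱] [Category.{u} 𝒲]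

/-- Restriction, along a functor `ψ : 𝒲 ⥤ 𝒱`, of a graded functor over the identity of
`𝒱` (i.e. of a morphism in the fiber `Map(𝒱)`). -/
def restrictAlong (ψ : 𝒲 ⥤ 𝒱) {𝔟 𝔞 : GradedCat k 𝒱}
    (H : GradedFunctor k (𝟭 𝒱) 𝔟 𝔞) :
    GradedFunctor k (𝟭 𝒲) (𝔟.restrict ψ) (𝔞.restrict ψ) where
  obj B := H.obj B
  map := fun {W W'} f {B B'} x => H.map (ψ.map f) x
  map_add := by intro W W' f B B' x y; (try dsimp only); exact H.map_add _ x y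
  map_smul := by intro W W' f B B' r x; (try dsimp only); exact H.map_smul _ r x
  map_id := by
    intro W B
    try dsimp only
    refine ((H.map_congr (ψ.map_id W) (𝔟.Hcast_heq (ψ.map_id W).symm (𝔟.id B))).trans
      (H.map_id B)).trans ?_
    exact (𝔞.Hcast_heq (ψ.map_id W).symm (𝔞.id (H.obj B))).symm
  map_comp := by
    intro W W' W'' f g C B A x y
    try dsimp only
    refine ((H.map_congr (ψ.map_comp g f) (𝔟.Hcast_heq (ψ.map_comp g f).symm
      (𝔟.comp x y))).trans (H.map_comp x y)).trans ?_
    exact (𝔞.Hcast_heq (ψ.map_comp g f).symm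
      (𝔞.comp (H.map (ψ.map f) x) (H.map (ψ.map g) y))).symm

/-- Objects of the pullback `𝒱₁ ×_𝒰 𝒱₂` of two functors of small categories. -/
structure CatPB {𝒱₁ 𝒱₂ : Type u} [Category.{u} 𝒱₁] [Category.{u} 𝒱₂]
    (φ₁ : 𝒱₁ ⥤ 𝒰) (φ₂ : 𝒱₂ ⥤ 𝒰) : Type u where
  left : 𝒱₁
  right : 𝒱₂
  eq : φ₁.obj left = φ₂.obj right

instance {𝒱₁ 𝒱₂ : Type u} [Category.{u} 𝒱₁] [Category.{u} 𝒱₂] (φ₁ : 𝒱₁ ⥤ 𝒰)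
    (φ₂ : 𝒱₂ ⥤ 𝒰) : Category.{u} (CatPB φ₁ φ₂) where
  Hom A B := { fg : (A.left ⟶ B.left) × (A.right ⟶ B.right) //
    φ₁.map fg.1 = eqToHom A.eq ≫ φ₂.map fg.2 ≫ eqToHom B.eq.symm }
  id A := ⟨(𝟙 _, 𝟙 _), by simp⟩
  comp {A B C} f g := ⟨(f.1.1 ≫ g.1.1, f.1.2 ≫ g.1.2), by
    rw [Functor.map_comp, Functor.map_comp, f.2, g.2]; simp⟩
  id_comp f := by apply Subtype.ext; simp
  comp_id f := by apply Subtype.ext; simp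
  assoc f g h := by apply Subtype.ext; simp

/-- The first projection of the pullback of categories. -/
def pbFstF {𝒱₁ 𝒱₂ : Type u} [Category.{u} 𝒱₁] [Category.{u} 𝒱₂] (φ₁ : 𝒱₁ ⥤ 𝒰)
    (φ₂ : 𝒱₂ ⥤ 𝒰) : CatPB φ₁ φ₂ ⥤ 𝒱₁ where
  obj A := A.left
  map f := f.1.1
  map_id _ := rfl
  map_comp _ _ := rfl

/-- The second projection of the pullback of categories. -/
def pbSndF {𝒱₁ 𝒱₂ : Type u} [Category.{u} 𝒱₁] [Category.{u} 𝒱₂] (φ₁ : 𝒱₁ ⥤ 𝒰)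
    (φ₂ : 𝒱₂ ⥤ 𝒰) : CatPB φ₁ φ₂ ⥤ 𝒱₂ where
  obj A := A.right
  map f := f.1.2
  map_id _ := rfl
  map_comp _ _ := rfl

end MapGr

namespace MapGr


section AuxCast

universe v w

variable {k : Type u} [CommRing k] {𝒰 : Type u} [Category.{u} 𝒰]

theorem heq_mod_add {M N : ModuleCat.{u} k} (h : M = N) {a b : M} {a' b' : N}
    (ha : HEq a a') (hb : HEq b b') : HEq (a + b) (a' + b') := by
  subst h; cases ha; cases hb; rfl

theorem heq_mod_smul {M N : ModuleCat.{u} k} (h : M = N) (r : k) {a : M} {a' : N}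
    (ha : HEq a a') : HEq (r • a) (r • a') := by
  subst h; cases ha; rfl

theorem heq_dep {α : Sort v} {β : α → Sort w} (f : ∀ a, β a) {a b : α}
    (h : a = b) : HEq (f a) (f b) := by subst h; rfl

theorem heq_of_eq_conj {X₁ Y₁ X₂ Y₂ : 𝒰} (hX : X₁ = X₂) (hY : Y₁ = Y₂)
    {f : X₁ ⟶ Y₁} {g : X₂ ⟶ Y₂}
    (c : f = eqToHom hX ≫ g ≫ eqToHom hY.symm) : HEq f g := by
  subst hX; subst hY
  simp only [eqToHom_refl, Category.id_comp, Category.comp_id] at c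
  rw [c]

theorem heq_id {X Y : 𝒰} (h : X = Y) : HEq (𝟙 X) (𝟙 Y) := by subst h; rfl

theorem heq_comp {X₁ Y₁ Z₁ X₂ Y₂ Z₂ : 𝒰} (hX : X₁ = X₂) (hY : Y₁ = Y₂) (hZ : Z₁ = Z₂)
    {f₁ : X₁ ⟶ Y₁} {f₂ : X₂ ⟶ Y₂} {g₁ : Y₁ ⟶ Z₁} {g₂ : Y₂ ⟶ Z₂}
    (hf : HEq f₁ f₂) (hg : HEq g₁ g₂) : HEq (f₁ ≫ g₁) (f₂ ≫ g₂) := by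
  subst hX; subst hY; subst hZ; cases hf; cases hg; rfl

theorem eq_conj_of_heq {X₁ Y₁ X₂ Y₂ : 𝒰} (hX : X₁ = X₂) (hY : Y₁ = Y₂)
    {f : X₁ ⟶ Y₁} {g : X₂ ⟶ Y₂} (h : HEq f g) :
    f = eqToHom hX ≫ g ≫ eqToHom hY.symm := by
  subst hX; subst hY; cases h; simp

namespace GradedCat

variable (𝔞 : GradedCat k 𝒰)

/-- Transport of objects along equality in `𝒰`. -/
def ocast {X Y : 𝒰} (h : X = Y) (B : 𝔞.Obj X) : 𝔞.Obj Y := h ▸ B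

theorem ocast_heq {X Y : 𝒰} (h : X = Y) (B : 𝔞.Obj X) : HEq (𝔞.ocast h B) B := by
  subst h; rfl

theorem hom_eq {X₁ Y₁ X₂ Y₂ : 𝒰} (hX : X₁ = X₂) (hY : Y₁ = Y₂) {f₁ : X₁ ⟶ Y₁}
    {f₂ : X₂ ⟶ Y₂} (hf : HEq f₁ f₂) {B₁ : 𝔞.Obj X₁} {B₂ : 𝔞.Obj X₂} {A₁ : 𝔞.Obj Y₁}
    {A₂ : 𝔞.Obj Y₂} (hB : HEq B₁ B₂) (hA : HEq A₁ A₂) :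
    𝔞.Hom f₁ B₁ A₁ = 𝔞.Hom f₂ B₂ A₂ := by
  subst hX; subst hY; cases hf; cases hB; cases hA; rfl

/-- Transport of graded morphisms along heterogeneous equality of all indices. -/
def mcast {X₁ Y₁ X₂ Y₂ : 𝒰} (hX : X₁ = X₂) (hY : Y₁ = Y₂) {f₁ : X₁ ⟶ Y₁}
    {f₂ : X₂ ⟶ Y₂} (hf : HEq f₁ f₂) {B₁ : 𝔞.Obj X₁} {B₂ : 𝔞.Obj X₂} {A₁ : 𝔞.Obj Y₁}
    {A₂ : 𝔞.Obj Y₂} (hB : HEq B₁ B₂) (hA : HEq A₁ A₂) (x : 𝔞.Hom f₁ B₁ A₁) :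
    𝔞.Hom f₂ B₂ A₂ :=
  _root_.cast (congrArg (fun M : ModuleCat.{u} k => (M : Type u))
    (𝔞.hom_eq hX hY hf hB hA)) x

theorem mcast_heq {X₁ Y₁ X₂ Y₂ : 𝒰} (hX : X₁ = X₂) (hY : Y₁ = Y₂) {f₁ : X₁ ⟶ Y₁}
    {f₂ : X₂ ⟶ Y₂} (hf : HEq f₁ f₂) {B₁ : 𝔞.Obj X₁} {B₂ : 𝔞.Obj X₂} {A₁ : 𝔞.Obj Y₁}
    {A₂ : 𝔞.Obj Y₂} (hB : HEq B₁ B₂) (hA : HEq A₁ A₂) (x : 𝔞.Hom f₁ B₁ A₁) :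
    HEq (𝔞.mcast hX hY hf hB hA x) x :=
  cast_heq _ _

theorem mcast_bijective {X₁ Y₁ X₂ Y₂ : 𝒰} (hX : X₁ = X₂) (hY : Y₁ = Y₂)
    {f₁ : X₁ ⟶ Y₁} {f₂ : X₂ ⟶ Y₂} (hf : HEq f₁ f₂) {B₁ : 𝔞.Obj X₁} {B₂ : 𝔞.Obj X₂}
    {A₁ : 𝔞.Obj Y₁} {A₂ : 𝔞.Obj Y₂} (hB : HEq B₁ B₂) (hA : HEq A₁ A₂) :
    Function.Bijective (𝔞.mcast hX hY hf hB hA) := by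
  subst hX; subst hY; cases hf; cases hB; cases hA
  exact Function.bijective_id

theorem mcast_add {X₁ Y₁ X₂ Y₂ : 𝒰} (hX : X₁ = X₂) (hY : Y₁ = Y₂) {f₁ : X₁ ⟶ Y₁}
    {f₂ : X₂ ⟶ Y₂} (hf : HEq f₁ f₂) {B₁ : 𝔞.Obj X₁} {B₂ : 𝔞.Obj X₂} {A₁ : 𝔞.Obj Y₁}
    {A₂ : 𝔞.Obj Y₂} (hB : HEq B₁ B₂) (hA : HEq A₁ A₂) (x y : 𝔞.Hom f₁ B₁ A₁) :
    𝔞.mcast hX hY hf hB hA (x + y) =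
      𝔞.mcast hX hY hf hB hA x + 𝔞.mcast hX hY hf hB hA y :=
  eq_of_heq ((𝔞.mcast_heq hX hY hf hB hA (x + y)).trans
    (heq_mod_add (𝔞.hom_eq hX hY hf hB hA) (𝔞.mcast_heq hX hY hf hB hA x).symm
      (𝔞.mcast_heq hX hY hf hB hA y).symm))

theorem mcast_smul {X₁ Y₁ X₂ Y₂ : 𝒰} (hX : X₁ = X₂) (hY : Y₁ = Y₂) {f₁ : X₁ ⟶ Y₁}
    {f₂ : X₂ ⟶ Y₂} (hf : HEq f₁ f₂) {B₁ : 𝔞.Obj X₁} {B₂ : 𝔞.Obj X₂} {A₁ : 𝔞.Obj Y₁}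
    {A₂ : 𝔞.Obj Y₂} (hB : HEq B₁ B₂) (hA : HEq A₁ A₂) (r : k) (x : 𝔞.Hom f₁ B₁ A₁) :
    𝔞.mcast hX hY hf hB hA (r • x) = r • 𝔞.mcast hX hY hf hB hA x :=
  eq_of_heq ((𝔞.mcast_heq hX hY hf hB hA (r • x)).trans
    (heq_mod_smul (𝔞.hom_eq hX hY hf hB hA) r (𝔞.mcast_heq hX hY hf hB hA x).symm))

theorem id_congr {X₁ X₂ : 𝒰} (hX : X₁ = X₂) {A₁ : 𝔞.Obj X₁} {A₂ : 𝔞.Obj X₂}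
    (hA : HEq A₁ A₂) : HEq (𝔞.id A₁) (𝔞.id A₂) := by
  subst hX; cases hA; rfl

theorem comp_congr'_s10 {X₁ Y₁ Z₁ X₂ Y₂ Z₂ : 𝒰} (hX : X₁ = X₂) (hY : Y₁ = Y₂)
    (hZ : Z₁ = Z₂) {f₁ : Y₁ ⟶ Z₁} {f₂ : Y₂ ⟶ Z₂} {g₁ : X₁ ⟶ Y₁} {g₂ : X₂ ⟶ Y₂}
    (hf : HEq f₁ f₂) (hg : HEq g₁ g₂) {C₁ : 𝔞.Obj X₁} {C₂ : 𝔞.Obj X₂}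
    {B₁ : 𝔞.Obj Y₁} {B₂ : 𝔞.Obj Y₂} {A₁ : 𝔞.Obj Z₁} {A₂ : 𝔞.Obj Z₂}
    (hC : HEq C₁ C₂) (hB : HEq B₁ B₂) (hA : HEq A₁ A₂)
    {x₁ : 𝔞.Hom f₁ B₁ A₁} {x₂ : 𝔞.Hom f₂ B₂ A₂} {y₁ : 𝔞.Hom g₁ C₁ B₁}
    {y₂ : 𝔞.Hom g₂ C₂ B₂} (hx : HEq x₁ x₂) (hy : HEq y₁ y₂) :
    HEq (𝔞.comp x₁ y₁) (𝔞.comp x₂ y₂) := by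
  subst hX; subst hY; subst hZ; cases hf; cases hg; cases hC; cases hB; cases hA
  cases hx; cases hy; rfl

end GradedCat

namespace GradedFunctor

variable {𝒱 : Type u} [Category.{u} 𝒱] {φ : 𝒱 ⥤ 𝒰} {𝔟 : GradedCat k 𝒱}
  {𝔞 : GradedCat k 𝒰} (F : GradedFunctor k φ 𝔟 𝔞)

theorem obj_congr {V₁ V₂ : 𝒱} (hV : V₁ = V₂) {B₁ : 𝔟.Obj V₁} {B₂ : 𝔟.Obj V₂}
    (hB : HEq B₁ B₂) : HEq (F.obj B₁) (F.obj B₂) := by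
  subst hV; cases hB; rfl

theorem map_congr'' {V₁ V₁' V₂ V₂' : 𝒱} (hV : V₁ = V₂) (hV' : V₁' = V₂')
    {f₁ : V₁ ⟶ V₁'} {f₂ : V₂ ⟶ V₂'} (hf : HEq f₁ f₂) {B₁ : 𝔟.Obj V₁} {B₂ : 𝔟.Obj V₂}
    {A₁ : 𝔟.Obj V₁'} {A₂ : 𝔟.Obj V₂'} (hB : HEq B₁ B₂) (hA : HEq A₁ A₂)
    {x₁ : 𝔟.Hom f₁ B₁ A₁} {x₂ : 𝔟.Hom f₂ B₂ A₂} (hx : HEq x₁ x₂) :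
    HEq (F.map f₁ x₁) (F.map f₂ x₂) := by
  subst hV; subst hV'; cases hf; cases hB; cases hA; cases hx; rfl

theorem ext'_s10 {F G : GradedFunctor k φ 𝔟 𝔞}
    (hobj : ∀ (V : 𝒱) (B : 𝔟.Obj V), F.obj B = G.obj B)
    (hmap : ∀ (V V' : 𝒱) (f : V ⟶ V') (B : 𝔟.Obj V) (B' : 𝔟.Obj V')
      (x : 𝔟.Hom f B B'), HEq (F.map f x) (G.map f x)) : F = G := by
  cases F with
  | mk Fo Fm h1 h2 h3 h4 =>
    cases G with
    | mk Go Gm h1' h2' h3' h4' =>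
      have ho : @Fo = @Go := by funext V B; exact hobj V B
      subst ho
      have hm : @Fm = @Gm := by
        funext V V' f B B' x; exact eq_of_heq (hmap V V' f B B' x)
      subst hm
      rfl

end GradedFunctor

end AuxCast


section AuxLift

variable {𝒰 : Type u} [Category.{u} 𝒰]

theorem Pth.cases1 {C : Type u} [Category.{u} C] {X Y : C} (p : Pth C 1 X Y) :
    ∃ f : X ⟶ Y, p = .cons f (.nil Y) := by
  cases p with
  | cons f q => cases q with
    | nil => exact ⟨f, rfl⟩

theorem Pth.cases2 {C : Type u} [Category.{u} C] {X Z : C} (p : Pth C 2 X Z) :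
    ∃ (Y : C) (f : X ⟶ Y) (g : Y ⟶ Z), p = .cons f (.cons g (.nil Z)) := by
  cases p with
  | cons f q =>
    obtain ⟨g, rfl⟩ := q.cases1
    exact ⟨_, f, g, rfl⟩

theorem Pth.cases3 {C : Type u} [Category.{u} C] {X W : C} (p : Pth C 3 X W) :
    ∃ (Y Z : C) (f : X ⟶ Y) (g : Y ⟶ Z) (h : Z ⟶ W),
      p = .cons f (.cons g (.cons h (.nil W))) := by
  cases p with
  | cons f q =>
    obtain ⟨Z, g, h, rfl⟩ := q.cases2
    exact ⟨_, _, f, g, h, rfl⟩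

variable {ι : Type u} {𝒱 : ι → Type u} [∀ i, Category.{u} (𝒱 i)] {φ : ∀ i, 𝒱 i ⥤ 𝒰}

theorem lift0 (h : ∀ s : NerveTot 𝒰 0, ∃ i, ∃ t : NerveTot (𝒱 i) 0,
      NerveTot.map (φ i) t = s) (U : 𝒰) :
    ∃ i, ∃ V : 𝒱 i, (φ i).obj V = U := by
  obtain ⟨i, t, ht⟩ := h ⟨U, U, .nil U⟩
  exact ⟨i, t.1, congrArg Sigma.fst ht⟩

theorem lift1 (h : ∀ s : NerveTot 𝒰 1, ∃ i, ∃ t : NerveTot (𝒱 i) 1,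
      NerveTot.map (φ i) t = s) {U U' : 𝒰} (f : U ⟶ U') :
    ∃ i, ∃ V V' : 𝒱 i, ∃ v : V ⟶ V', ∃ _ : (φ i).obj V = U,
      ∃ _ : (φ i).obj V' = U', HEq ((φ i).map v) f := by
  obtain ⟨i, ⟨V, Y, p⟩, ht⟩ := h ⟨U, U', .cons f (.nil U')⟩
  obtain ⟨v, rfl⟩ := p.cases1
  dsimp [NerveTot.map, Pth.map] at ht
  injection ht with e1 ht
  subst e1
  replace ht := eq_of_heq ht
  injection ht with e2 ht
  subst e2
  replace ht := eq_of_heq ht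
  injection ht with h1 h2 h3 h4 h5 h6
  exact ⟨i, V, Y, v, rfl, rfl, heq_of_eq h5⟩

theorem lift2 (h : ∀ s : NerveTot 𝒰 2, ∃ i, ∃ t : NerveTot (𝒱 i) 2,
      NerveTot.map (φ i) t = s) {U U' U'' : 𝒰} (g : U ⟶ U') (f : U' ⟶ U'') :
    ∃ i, ∃ V V' V'' : 𝒱 i, ∃ v : V ⟶ V', ∃ v' : V' ⟶ V'', ∃ _ : (φ i).obj V = U,
      ∃ _ : (φ i).obj V' = U', ∃ _ : (φ i).obj V'' = U'',
      HEq ((φ i).map v) g ∧ HEq ((φ i).map v') f := by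
  obtain ⟨i, ⟨V, Y, p⟩, ht⟩ := h ⟨U, U'', .cons g (.cons f (.nil U''))⟩
  obtain ⟨V', v, v', rfl⟩ := p.cases2
  dsimp [NerveTot.map, Pth.map] at ht
  injection ht with e1 ht
  subst e1
  replace ht := eq_of_heq ht
  injection ht with e2 ht
  subst e2
  replace ht := eq_of_heq ht
  injection ht with h1 h2 h3 h4 h5 h6
  subst h3
  replace h6 := eq_of_heq h6
  injection h6 with g1 g2 g3 g4 g5 g6
  exact ⟨i, V, V', Y, v, v', rfl, rfl, rfl, h5, heq_of_eq g5⟩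

theorem lift3 (h : ∀ s : NerveTot 𝒰 3, ∃ i, ∃ t : NerveTot (𝒱 i) 3,
      NerveTot.map (φ i) t = s) {U₀ U₁ U₂ U₃ : 𝒰} (f₁ : U₀ ⟶ U₁) (f₂ : U₁ ⟶ U₂)
    (f₃ : U₂ ⟶ U₃) :
    ∃ i, ∃ V₀ V₁ V₂ V₃ : 𝒱 i, ∃ v₁ : V₀ ⟶ V₁, ∃ v₂ : V₁ ⟶ V₂, ∃ v₃ : V₂ ⟶ V₃,
      ∃ _ : (φ i).obj V₀ = U₀, ∃ _ : (φ i).obj V₁ = U₁, ∃ _ : (φ i).obj V₂ = U₂,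
      ∃ _ : (φ i).obj V₃ = U₃,
      HEq ((φ i).map v₁) f₁ ∧ HEq ((φ i).map v₂) f₂ ∧ HEq ((φ i).map v₃) f₃ := by
  obtain ⟨i, ⟨V, Y, p⟩, ht⟩ := h ⟨U₀, U₃, .cons f₁ (.cons f₂ (.cons f₃ (.nil U₃)))⟩
  obtain ⟨V₁, V₂, v₁, v₂, v₃, rfl⟩ := p.cases3
  dsimp [NerveTot.map, Pth.map] at ht
  injection ht with e1 ht
  subst e1
  replace ht := eq_of_heq ht
  injection ht with e2 ht
  subst e2
  replace ht := eq_of_heq ht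
  injection ht with h1 h2 h3 h4 h5 h6
  subst h3
  replace h6 := eq_of_heq h6
  injection h6 with g1 g2 g3 g4 g5 g6
  subst g3
  replace g6 := eq_of_heq g6
  injection g6 with k1 k2 k3 k4 k5 k6
  exact ⟨i, V, V₁, V₂, Y, v₁, v₂, v₃, rfl, rfl, rfl, rfl,
    h5, g5, heq_of_eq k5⟩

end AuxLift


section Part1

variable {k : Type u} [CommRing k] {𝒰 : Type u} [Category.{u} 𝒰]
  {ι : Type u} {𝒱 : ι → Type u} [∀ i, Category.{u} (𝒱 i)]

/-- Choice data: a lift of an object of the base along the cover. -/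
structure ObjDat (φ : ∀ i, 𝒱 i ⥤ 𝒰) (U : 𝒰) : Type u where
  i : ι
  V : 𝒱 i
  e : (φ i).obj V = U

/-- Choice data: a lift of a morphism of the base along the cover. -/
structure LiftDat (φ : ∀ i, 𝒱 i ⥤ 𝒰) {U U' : 𝒰} (f : U ⟶ U') : Type u where
  i : ι
  V : 𝒱 i
  V' : 𝒱 i
  v : V ⟶ V'
  e : (φ i).obj V = U
  e' : (φ i).obj V' = U'
  hv : HEq ((φ i).map v) f


noncomputable def ObjDat.mk' {φ : ∀ i, 𝒱 i ⥤ 𝒰} {U : 𝒰}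
    (h : ∃ i, ∃ V : 𝒱 i, (φ i).obj V = U) : ObjDat φ U :=
  ⟨h.choose, h.choose_spec.choose, h.choose_spec.choose_spec⟩

noncomputable def LiftDat.mk' {φ : ∀ i, 𝒱 i ⥤ 𝒰} {U U' : 𝒰} {f : U ⟶ U'}
    (h : ∃ i, ∃ V V' : 𝒱 i, ∃ v : V ⟶ V', ∃ _ : (φ i).obj V = U,
      ∃ _ : (φ i).obj V' = U', HEq ((φ i).map v) f) : LiftDat φ f :=
  ⟨h.choose, h.choose_spec.choose, h.choose_spec.choose_spec.choose,
   h.choose_spec.choose_spec.choose_spec.choose,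
   h.choose_spec.choose_spec.choose_spec.choose_spec.choose,
   h.choose_spec.choose_spec.choose_spec.choose_spec.choose_spec.choose,
   h.choose_spec.choose_spec.choose_spec.choose_spec.choose_spec.choose_spec⟩

variable (φ : ∀ i, 𝒱 i ⥤ 𝒰) (𝔟 𝔞 : GradedCat k 𝒰)
  (H : ∀ i, GradedFunctor k (𝟭 (𝒱 i)) (𝔟.restrict (φ i)) (𝔞.restrict (φ i)))
  (c0 : ∀ U : 𝒰, ObjDat φ U) (c1 : ∀ {U U' : 𝒰} (f : U ⟶ U'), LiftDat φ f)

/-- The glued functor, on objects. -/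
def Gobj {U : 𝒰} (B : 𝔟.Obj U) : 𝔞.Obj U :=
  𝔞.ocast (c0 U).e ((H (c0 U).i).obj (𝔟.ocast (c0 U).e.symm B))

variable {φ}

theorem Gobj_spec
    (hco : ∀ (i j : ι) (P : CatPB (φ i) (φ j)) (B₁ : 𝔟.Obj ((φ i).obj P.left))
      (B₂ : 𝔟.Obj ((φ j).obj P.right)), HEq B₁ B₂ →
      HEq ((H i).obj (V := P.left) B₁) ((H j).obj (V := P.right) B₂))
    {U : 𝒰} (B : 𝔟.Obj U) (i : ι) (V : 𝒱 i) (e : (φ i).obj V = U)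
    (B₁ : 𝔟.Obj ((φ i).obj V)) (hB : HEq B₁ B) :
    HEq ((H i).obj (V := V) B₁) (Gobj φ 𝔟 𝔞 H c0 B) := by
  refine HEq.trans ?_ (𝔞.ocast_heq (c0 U).e _).symm
  exact hco i (c0 U).i ⟨V, (c0 U).V, e.trans (c0 U).e.symm⟩ B₁
    (𝔟.ocast (c0 U).e.symm B) (hB.trans (𝔟.ocast_heq _ _).symm)

variable (hco : ∀ (i j : ι) (P : CatPB (φ i) (φ j)) (B₁ : 𝔟.Obj ((φ i).obj P.left))
    (B₂ : 𝔟.Obj ((φ j).obj P.right)), HEq B₁ B₂ →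
    HEq ((H i).obj (V := P.left) B₁) ((H j).obj (V := P.right) B₂))

/-- The glued functor, on graded morphisms. -/
def Gmap {U U' : 𝒰} (f : U ⟶ U') {B : 𝔟.Obj U} {B' : 𝔟.Obj U'} (x : 𝔟.Hom f B B') :
    𝔞.Hom f (Gobj φ 𝔟 𝔞 H c0 B) (Gobj φ 𝔟 𝔞 H c0 B') :=
  𝔞.mcast (f₁ := (φ (c1 f).i).map (c1 f).v)
    (B₁ := ((H (c1 f).i).obj (𝔟.ocast (c1 f).e.symm B) :
      𝔞.Obj ((φ (c1 f).i).obj (c1 f).V)))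
    (A₁ := ((H (c1 f).i).obj (𝔟.ocast (c1 f).e'.symm B') :
      𝔞.Obj ((φ (c1 f).i).obj (c1 f).V')))
    (c1 f).e (c1 f).e' (c1 f).hv
    (Gobj_spec 𝔟 𝔞 H c0 hco B (c1 f).i (c1 f).V (c1 f).e _ (𝔟.ocast_heq _ _))
    (Gobj_spec 𝔟 𝔞 H c0 hco B' (c1 f).i (c1 f).V' (c1 f).e' _ (𝔟.ocast_heq _ _))
    ((H (c1 f).i).map (B := 𝔟.ocast (c1 f).e.symm B) (B' := 𝔟.ocast (c1 f).e'.symm B')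
      (c1 f).v
      (𝔟.mcast (c1 f).e.symm (c1 f).e'.symm (c1 f).hv.symm
        (𝔟.ocast_heq _ _).symm (𝔟.ocast_heq _ _).symm x))

theorem Gmap_spec
    (hcm : ∀ (i j : ι) (P Q : CatPB (φ i) (φ j)) (f : P ⟶ Q)
      (B₁ : 𝔟.Obj ((φ i).obj P.left)) (B₁' : 𝔟.Obj ((φ i).obj Q.left))
      (B₂ : 𝔟.Obj ((φ j).obj P.right)) (B₂' : 𝔟.Obj ((φ j).obj Q.right))
      (x : 𝔟.Hom ((φ i).map f.1.1) B₁ B₁') (y : 𝔟.Hom ((φ j).map f.1.2) B₂ B₂'),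
      HEq B₁ B₂ → HEq B₁' B₂' → HEq x y →
      HEq ((H i).map f.1.1 x) ((H j).map f.1.2 y))
    {U U' : 𝒰} (f : U ⟶ U') {B : 𝔟.Obj U} {B' : 𝔟.Obj U'} (x : 𝔟.Hom f B B')
    (i : ι) (V V' : 𝒱 i) (v : V ⟶ V') (e : (φ i).obj V = U) (e' : (φ i).obj V' = U')
    (hv : HEq ((φ i).map v) f) (B₁ : 𝔟.Obj ((φ i).obj V)) (B₁' : 𝔟.Obj ((φ i).obj V'))
    (hB : HEq B₁ B) (hB' : HEq B₁' B') (x₁ : 𝔟.Hom ((φ i).map v) B₁ B₁')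
    (hx : HEq x₁ x) :
    HEq ((H i).map (V := V) (V' := V') v x₁) (Gmap 𝔟 𝔞 H c0 @c1 hco f x) := by
  refine HEq.trans ?_
    (𝔞.mcast_heq (f₁ := (φ (c1 f).i).map (c1 f).v)
      (B₁ := ((H (c1 f).i).obj (𝔟.ocast (c1 f).e.symm B) :
        𝔞.Obj ((φ (c1 f).i).obj (c1 f).V)))
      (A₁ := ((H (c1 f).i).obj (𝔟.ocast (c1 f).e'.symm B') :
        𝔞.Obj ((φ (c1 f).i).obj (c1 f).V')))
      (c1 f).e (c1 f).e' (c1 f).hv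
      (Gobj_spec 𝔟 𝔞 H c0 hco B (c1 f).i (c1 f).V (c1 f).e _ (𝔟.ocast_heq _ _))
      (Gobj_spec 𝔟 𝔞 H c0 hco B' (c1 f).i (c1 f).V' (c1 f).e' _ (𝔟.ocast_heq _ _))
      _).symm
  exact hcm i (c1 f).i ⟨V, (c1 f).V, e.trans (c1 f).e.symm⟩
    ⟨V', (c1 f).V', e'.trans (c1 f).e'.symm⟩
    ⟨(v, (c1 f).v), eq_conj_of_heq (e.trans (c1 f).e.symm) (e'.trans (c1 f).e'.symm) (hv.trans (c1 f).hv.symm)⟩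
    B₁ B₁' _ _ x₁ _ (hB.trans (𝔟.ocast_heq _ _).symm) (hB'.trans (𝔟.ocast_heq _ _).symm)
    (hx.trans (𝔟.mcast_heq _ _ _ _ _ _).symm)

variable (hcm : ∀ (i j : ι) (P Q : CatPB (φ i) (φ j)) (f : P ⟶ Q)
    (B₁ : 𝔟.Obj ((φ i).obj P.left)) (B₁' : 𝔟.Obj ((φ i).obj Q.left))
    (B₂ : 𝔟.Obj ((φ j).obj P.right)) (B₂' : 𝔟.Obj ((φ j).obj Q.right))
    (x : 𝔟.Hom ((φ i).map f.1.1) B₁ B₁') (y : 𝔟.Hom ((φ j).map f.1.2) B₂ B₂'),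
    HEq B₁ B₂ → HEq B₁' B₂' → HEq x y →
    HEq ((H i).map f.1.1 x) ((H j).map f.1.2 y))

/-- The glued graded functor over `𝟭 𝒰`. -/
def Gfun (h2 : ∀ s : NerveTot 𝒰 2, ∃ i, ∃ t : NerveTot (𝒱 i) 2,
    NerveTot.map (φ i) t = s) : GradedFunctor k (𝟭 𝒰) 𝔟 𝔞 where
  obj := Gobj φ 𝔟 𝔞 H c0
  map := fun {U U'} f {B B'} x => Gmap 𝔟 𝔞 H c0 @c1 hco f x
  map_add := by
    intro U U' f B B' x y
    dsimp only [Gmap]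
    erw [𝔟.mcast_add, (H (c1 f).i).map_add, 𝔞.mcast_add]
  map_smul := by
    intro U U' f B B' r x
    dsimp only [Gmap]
    erw [𝔟.mcast_smul, (H (c1 f).i).map_smul, 𝔞.mcast_smul]
  map_id := by
    intro U B
    have hv : HEq ((φ (c0 U).i).map (𝟙 (c0 U).V)) (𝟙 U) := by
      rw [(φ (c0 U).i).map_id]; exact heq_id (c0 U).e
    have hx : HEq ((𝔟.restrict (φ (c0 U).i)).id (𝔟.ocast (c0 U).e.symm B)) (𝔟.id B) :=
      (𝔟.Hcast_heq ((φ (c0 U).i).map_id (c0 U).V).symm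
        (𝔟.id (𝔟.ocast (c0 U).e.symm B))).trans
        (𝔟.id_congr (c0 U).e (𝔟.ocast_heq (c0 U).e.symm B))
    refine (Gmap_spec 𝔟 𝔞 H c0 @c1 hco hcm (𝟙 U) (𝔟.id B) (c0 U).i (c0 U).V (c0 U).V
      (𝟙 (c0 U).V) (c0 U).e (c0 U).e hv _ _ (𝔟.ocast_heq _ _) (𝔟.ocast_heq _ _)
      ((𝔟.restrict (φ (c0 U).i)).id (𝔟.ocast (c0 U).e.symm B)) hx).symm.trans ?_
    refine ((H (c0 U).i).map_id _).trans ?_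
    exact (𝔞.Hcast_heq ((φ (c0 U).i).map_id (c0 U).V).symm
      (𝔞.id ((H (c0 U).i).obj (𝔟.ocast (c0 U).e.symm B)))).trans (𝔞.id_congr (c0 U).e
      (Gobj_spec 𝔟 𝔞 H c0 hco B _ _ (c0 U).e _ (𝔟.ocast_heq _ _)))
  map_comp := by
    intro V V' V'' f g C B A x y
    obtain ⟨i, V₁, V₂, V₃, v, v', e, e', e'', hv, hv'⟩ := lift2 h2 g f
    have hvz : HEq ((φ i).map (v ≫ v')) (g ≫ f) := by
      rw [(φ i).map_comp]; exact heq_comp e e' e'' hv hv'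
    have hx₁ : HEq (𝔟.mcast e'.symm e''.symm hv'.symm (𝔟.ocast_heq e'.symm B).symm
        (𝔟.ocast_heq e''.symm A).symm x) x :=
      𝔟.mcast_heq e'.symm e''.symm hv'.symm (𝔟.ocast_heq e'.symm B).symm
        (𝔟.ocast_heq e''.symm A).symm x
    have hy₁ : HEq (𝔟.mcast e.symm e'.symm hv.symm (𝔟.ocast_heq e.symm C).symm
        (𝔟.ocast_heq e'.symm B).symm y) y :=
      𝔟.mcast_heq e.symm e'.symm hv.symm (𝔟.ocast_heq e.symm C).symm
        (𝔟.ocast_heq e'.symm B).symm y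
    have hz : HEq ((𝔟.restrict (φ i)).comp
        (𝔟.mcast e'.symm e''.symm hv'.symm (𝔟.ocast_heq e'.symm B).symm
          (𝔟.ocast_heq e''.symm A).symm x)
        (𝔟.mcast e.symm e'.symm hv.symm (𝔟.ocast_heq e.symm C).symm
          (𝔟.ocast_heq e'.symm B).symm y)) (𝔟.comp x y) :=
      (𝔟.Hcast_heq ((φ i).map_comp v v').symm _).trans (𝔟.comp_congr'_s10 e e' e'' hv' hv
        (𝔟.ocast_heq e.symm C) (𝔟.ocast_heq e'.symm B) (𝔟.ocast_heq e''.symm A)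
        hx₁ hy₁)
    refine HEq.trans (Gmap_spec 𝔟 𝔞 H c0 @c1 hco hcm (g ≫ f) (𝔟.comp x y) i V₁ V₃
      (v ≫ v') e e'' hvz (𝔟.ocast e.symm C) (𝔟.ocast e''.symm A) (𝔟.ocast_heq _ _)
      (𝔟.ocast_heq _ _) ((𝔟.restrict (φ i)).comp
        (𝔟.mcast e'.symm e''.symm hv'.symm (𝔟.ocast_heq e'.symm B).symm
          (𝔟.ocast_heq e''.symm A).symm x)
        (𝔟.mcast e.symm e'.symm hv.symm (𝔟.ocast_heq e.symm C).symm
          (𝔟.ocast_heq e'.symm B).symm y)) hz).symm ?_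
    refine ((H i).map_comp _ _).trans ?_
    refine (𝔞.Hcast_heq ((φ i).map_comp v v').symm _).trans ?_
    exact 𝔞.comp_congr'_s10 e e' e'' hv' hv
      (Gobj_spec 𝔟 𝔞 H c0 hco C i V₁ e _ (𝔟.ocast_heq _ _))
      (Gobj_spec 𝔟 𝔞 H c0 hco B i V₂ e' _ (𝔟.ocast_heq _ _))
      (Gobj_spec 𝔟 𝔞 H c0 hco A i V₃ e'' _ (𝔟.ocast_heq _ _))
      (Gmap_spec 𝔟 𝔞 H c0 @c1 hco hcm f x i V₂ V₃ v' e' e'' hv' _ _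
        (𝔟.ocast_heq _ _) (𝔟.ocast_heq _ _) _ hx₁)
      (Gmap_spec 𝔟 𝔞 H c0 @c1 hco hcm g y i V₁ V₂ v e e' hv _ _
        (𝔟.ocast_heq _ _) (𝔟.ocast_heq _ _) _ hy₁)

theorem Gfun_restrict (h2 : ∀ s : NerveTot 𝒰 2, ∃ i, ∃ t : NerveTot (𝒱 i) 2,
    NerveTot.map (φ i) t = s) (i : ι) :
    restrictAlong (φ i) (Gfun 𝔟 𝔞 H c0 @c1 hco hcm h2) = H i := by
  refine GradedFunctor.ext'_s10 (fun V B => ?_) (fun V V' f B B' x => ?_)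
  · exact (eq_of_heq (Gobj_spec 𝔟 𝔞 H c0 hco B i V rfl B HEq.rfl)).symm
  · exact (Gmap_spec 𝔟 𝔞 H c0 @c1 hco hcm ((φ i).map f) x i V V' f rfl rfl HEq.rfl
      B B' HEq.rfl HEq.rfl x HEq.rfl).symm

theorem Gfun_unique (h2 : ∀ s : NerveTot 𝒰 2, ∃ i, ∃ t : NerveTot (𝒱 i) 2,
    NerveTot.map (φ i) t = s) (G' : GradedFunctor k (𝟭 𝒰) 𝔟 𝔞)
    (hG' : ∀ i, restrictAlong (φ i) G' = H i) :
    G' = Gfun 𝔟 𝔞 H c0 @c1 hco hcm h2 := by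
  refine GradedFunctor.ext'_s10 (fun U B => ?_) (fun U U' f B B' x => ?_)
  · refine eq_of_heq (((G'.obj_congr (c0 U).e.symm (𝔟.ocast_heq _ _).symm).trans
      (heq_of_eq (congrArg (fun F => F.obj (V := (c0 U).V) (𝔟.ocast (c0 U).e.symm B))
        (hG' (c0 U).i)))).trans ?_)
    exact Gobj_spec 𝔟 𝔞 H c0 hco B _ _ (c0 U).e _ (𝔟.ocast_heq _ _)
  · refine HEq.trans ?_ (Gmap_spec 𝔟 𝔞 H c0 @c1 hco hcm f x _ _ _ (c1 f).v
      (c1 f).e (c1 f).e' (c1 f).hv (𝔟.ocast (c1 f).e.symm B)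
      (𝔟.ocast (c1 f).e'.symm B') (𝔟.ocast_heq (c1 f).e.symm B)
      (𝔟.ocast_heq (c1 f).e'.symm B')
      (𝔟.mcast (c1 f).e.symm (c1 f).e'.symm (c1 f).hv.symm
        (𝔟.ocast_heq (c1 f).e.symm B).symm (𝔟.ocast_heq (c1 f).e'.symm B').symm x)
      (𝔟.mcast_heq (c1 f).e.symm (c1 f).e'.symm (c1 f).hv.symm
        (𝔟.ocast_heq (c1 f).e.symm B).symm (𝔟.ocast_heq (c1 f).e'.symm B').symm x))
    rw [← hG' (c1 f).i]
    exact G'.map_congr'' (c1 f).e.symm (c1 f).e'.symm (c1 f).hv.symm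
      (𝔟.ocast_heq (c1 f).e.symm B).symm (𝔟.ocast_heq (c1 f).e'.symm B').symm
      (𝔟.mcast_heq (c1 f).e.symm (c1 f).e'.symm (c1 f).hv.symm
        (𝔟.ocast_heq (c1 f).e.symm B).symm (𝔟.ocast_heq (c1 f).e'.symm B').symm
        x).symm

end Part1


section Part2

variable {k : Type u} [CommRing k] {𝒰 : Type u} [Category.{u} 𝒰]
  {ι : Type u} {𝒱 : ι → Type u} [∀ i, Category.{u} (𝒱 i)] {φ : ∀ i, 𝒱 i ⥤ 𝒰}
  (𝔟 : ∀ i, GradedCat k (𝒱 i))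
  (ρ : ∀ i j, GradedFunctor k (𝟭 (CatPB (φ i) (φ j)))
    ((𝔟 i).restrict (pbFstF (φ i) (φ j))) ((𝔟 j).restrict (pbSndF (φ i) (φ j))))

/-- Object transport along the descent isomorphisms. -/
def tObj (i j : ι) {V : 𝒱 i} {W : 𝒱 j} (e : (φ i).obj V = (φ j).obj W)
    (B : (𝔟 i).Obj V) : (𝔟 j).Obj W :=
  (ρ i j).obj (V := ⟨V, W, e⟩) B

/-- Morphism transport along the descent isomorphisms. -/
def tMor (i j : ι) {V V' : 𝒱 i} {W W' : 𝒱 j} (e : (φ i).obj V = (φ j).obj W)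
    (e' : (φ i).obj V' = (φ j).obj W') (v : V ⟶ V') (w : W ⟶ W')
    (c : (φ i).map v = eqToHom e ≫ (φ j).map w ≫ eqToHom e'.symm)
    {B : (𝔟 i).Obj V} {B' : (𝔟 i).Obj V'} (x : (𝔟 i).Hom v B B') :
    (𝔟 j).Hom w (tObj 𝔟 ρ i j e B) (tObj 𝔟 ρ i j e' B') :=
  (ρ i j).map (V := ⟨V, W, e⟩) (V' := ⟨V', W', e'⟩) ⟨(v, w), c⟩ x

variable (hbij : ∀ i j (P : CatPB (φ i) (φ j)),
    Function.Bijective fun B : (𝔟 i).Obj P.left => (ρ i j).obj (V := P) B)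
  (hsub : ∀ i j, (ρ i j).Subcartesian)
  (hobjCoc : ∀ (i j l : ι) (V₁ : 𝒱 i) (V₂ : 𝒱 j) (V₃ : 𝒱 l)
    (h₁₂ : (φ i).obj V₁ = (φ j).obj V₂) (h₂₃ : (φ j).obj V₂ = (φ l).obj V₃)
    (B : (𝔟 i).Obj V₁),
    (ρ j l).obj (V := ⟨V₂, V₃, h₂₃⟩) ((ρ i j).obj (V := ⟨V₁, V₂, h₁₂⟩) B) =
      (ρ i l).obj (V := ⟨V₁, V₃, h₁₂.trans h₂₃⟩) B)
  (hmorCoc : ∀ (i j l : ι) (V₁ V₁' : 𝒱 i) (V₂ V₂' : 𝒱 j) (V₃ V₃' : 𝒱 l)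
    (h₁₂ : (φ i).obj V₁ = (φ j).obj V₂) (h₂₃ : (φ j).obj V₂ = (φ l).obj V₃)
    (h₁₂' : (φ i).obj V₁' = (φ j).obj V₂') (h₂₃' : (φ j).obj V₂' = (φ l).obj V₃')
    (v₁ : V₁ ⟶ V₁') (v₂ : V₂ ⟶ V₂') (v₃ : V₃ ⟶ V₃')
    (c₁₂ : (φ i).map v₁ = eqToHom h₁₂ ≫ (φ j).map v₂ ≫ eqToHom h₁₂'.symm)
    (c₂₃ : (φ j).map v₂ = eqToHom h₂₃ ≫ (φ l).map v₃ ≫ eqToHom h₂₃'.symm)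
    (c₁₃ : (φ i).map v₁ = eqToHom (h₁₂.trans h₂₃) ≫ (φ l).map v₃ ≫
      eqToHom ((h₁₂'.trans h₂₃').symm))
    (B : (𝔟 i).Obj V₁) (B' : (𝔟 i).Obj V₁') (x : (𝔟 i).Hom v₁ B B'),
    HEq ((ρ j l).map (V := ⟨V₂, V₃, h₂₃⟩) (V' := ⟨V₂', V₃', h₂₃'⟩)
        (⟨(v₂, v₃), c₂₃⟩ : (⟨V₂, V₃, h₂₃⟩ : CatPB (φ j) (φ l)) ⟶ ⟨V₂', V₃', h₂₃'⟩)
        ((ρ i j).map (V := ⟨V₁, V₂, h₁₂⟩) (V' := ⟨V₁', V₂', h₁₂'⟩)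
          (⟨(v₁, v₂), c₁₂⟩ : (⟨V₁, V₂, h₁₂⟩ : CatPB (φ i) (φ j)) ⟶ ⟨V₁', V₂', h₁₂'⟩)
          x))
      ((ρ i l).map (V := ⟨V₁, V₃, h₁₂.trans h₂₃⟩) (V' := ⟨V₁', V₃', h₁₂'.trans h₂₃'⟩)
        (⟨(v₁, v₃), c₁₃⟩ :
          (⟨V₁, V₃, h₁₂.trans h₂₃⟩ : CatPB (φ i) (φ l)) ⟶ ⟨V₁', V₃', h₁₂'.trans h₂₃'⟩)
        x))

include hobjCoc in
theorem tObj_coc (i j l : ι) {V : 𝒱 i} {W : 𝒱 j} {X : 𝒱 l}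
    (e₁ : (φ i).obj V = (φ j).obj W) (e₂ : (φ j).obj W = (φ l).obj X)
    (B : (𝔟 i).Obj V) :
    tObj 𝔟 ρ j l e₂ (tObj 𝔟 ρ i j e₁ B) = tObj 𝔟 ρ i l (e₁.trans e₂) B :=
  hobjCoc i j l V W X e₁ e₂ B

include hbij in
theorem tObj_bij (i j : ι) {V : 𝒱 i} {W : 𝒱 j} (e : (φ i).obj V = (φ j).obj W) :
    Function.Bijective (tObj 𝔟 ρ i j (V := V) (W := W) e) :=
  hbij i j ⟨V, W, e⟩

include hbij hobjCoc in
theorem tObj_self (i : ι) {V : 𝒱 i} (e : (φ i).obj V = (φ i).obj V)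
    (B : (𝔟 i).Obj V) : tObj 𝔟 ρ i i e B = B :=
  (tObj_bij 𝔟 ρ hbij i i e).injective (tObj_coc 𝔟 ρ hobjCoc i i i e e B)

include hsub in
theorem tMor_bij (i j : ι) {V V' : 𝒱 i} {W W' : 𝒱 j} (e : (φ i).obj V = (φ j).obj W)
    (e' : (φ i).obj V' = (φ j).obj W') (v : V ⟶ V') (w : W ⟶ W')
    (c : (φ i).map v = eqToHom e ≫ (φ j).map w ≫ eqToHom e'.symm)
    (B : (𝔟 i).Obj V) (B' : (𝔟 i).Obj V') :
    Function.Bijective (tMor 𝔟 ρ i j e e' v w c (B := B) (B' := B')) :=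
  hsub i j (⟨(v, w), c⟩ : (⟨V, W, e⟩ : CatPB (φ i) (φ j)) ⟶ ⟨V', W', e'⟩) B B'

include hmorCoc in
theorem tMor_coc (i j l : ι) {V V' : 𝒱 i} {W W' : 𝒱 j} {X X' : 𝒱 l}
    (e₁ : (φ i).obj V = (φ j).obj W) (e₁' : (φ i).obj V' = (φ j).obj W')
    (e₂ : (φ j).obj W = (φ l).obj X) (e₂' : (φ j).obj W' = (φ l).obj X')
    (v : V ⟶ V') (w : W ⟶ W') (x' : X ⟶ X')
    (c₁ : (φ i).map v = eqToHom e₁ ≫ (φ j).map w ≫ eqToHom e₁'.symm)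
    (c₂ : (φ j).map w = eqToHom e₂ ≫ (φ l).map x' ≫ eqToHom e₂'.symm)
    (c₃ : (φ i).map v = eqToHom (e₁.trans e₂) ≫ (φ l).map x' ≫
      eqToHom ((e₁'.trans e₂').symm))
    {B : (𝔟 i).Obj V} {B' : (𝔟 i).Obj V'} (x : (𝔟 i).Hom v B B') :
    HEq (tMor 𝔟 ρ j l e₂ e₂' w x' c₂ (tMor 𝔟 ρ i j e₁ e₁' v w c₁ x))
      (tMor 𝔟 ρ i l (e₁.trans e₂) (e₁'.trans e₂') v x' c₃ x) :=
  hmorCoc i j l V V' W W' X X' e₁ e₂ e₁' e₂' v w x' c₁ c₂ c₃ B B' x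

include hsub hmorCoc hbij hobjCoc in
theorem tMor_selfheq (i : ι) {V V' : 𝒱 i} (v : V ⟶ V')
    (e : (φ i).obj V = (φ i).obj V) (e' : (φ i).obj V' = (φ i).obj V')
    (c : (φ i).map v = eqToHom e ≫ (φ i).map v ≫ eqToHom e'.symm)
    {B : (𝔟 i).Obj V} {B' : (𝔟 i).Obj V'} (x : (𝔟 i).Hom v B B') :
    HEq (tMor 𝔟 ρ i i e e' v v c x) x := by
  have hBB : HEq (tObj 𝔟 ρ i i e B) B :=
    heq_of_eq (tObj_self 𝔟 ρ hbij hobjCoc i e B)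
  have hBB' : HEq (tObj 𝔟 ρ i i e' B') B' :=
    heq_of_eq (tObj_self 𝔟 ρ hbij hobjCoc i e' B')
  set T := fun a : (𝔟 i).Hom v B B' =>
    (𝔟 i).mcast rfl rfl HEq.rfl hBB hBB' (tMor 𝔟 ρ i i e e' v v c a) with hTdef
  have hT : ∀ a, HEq (T a) (tMor 𝔟 ρ i i e e' v v c a) := fun a =>
    (𝔟 i).mcast_heq rfl rfl HEq.rfl hBB hBB' (tMor 𝔟 ρ i i e e' v v c a)
  have hTT : ∀ a, T (T a) = T a := by
    intro a
    refine eq_of_heq (((hT (T a)).trans ?_).trans (hT a).symm)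
    refine HEq.trans ((ρ i i).map_congr'' rfl rfl HEq.rfl hBB.symm hBB'.symm
      (hT a)) ?_
    exact tMor_coc 𝔟 ρ hmorCoc i i i e e' e e' v v v c c c a
  have hbijT : Function.Bijective T :=
    ((𝔟 i).mcast_bijective rfl rfl HEq.rfl hBB hBB').comp
      (tMor_bij 𝔟 ρ hsub i i e e' v v c B B')
  exact (hT x).symm.trans (heq_of_eq (hbijT.injective (hTT x)))

/-- Choice data: a joint lift of a composable pair. -/
structure Lift2Dat (φ : ∀ i, 𝒱 i ⥤ 𝒰) {U U' U'' : 𝒰} (g : U ⟶ U') (f : U' ⟶ U'') :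
    Type u where
  i : ι
  V : 𝒱 i
  V' : 𝒱 i
  V'' : 𝒱 i
  v : V ⟶ V'
  v' : V' ⟶ V''
  e : (φ i).obj V = U
  e' : (φ i).obj V' = U'
  e'' : (φ i).obj V'' = U''
  hv : HEq ((φ i).map v) g
  hv' : HEq ((φ i).map v') f

variable {U U' U'' : 𝒰}

def Lift2Dat.fst {g : U ⟶ U'} {f : U' ⟶ U''} (P : Lift2Dat φ g f) : LiftDat φ g :=
  ⟨P.i, P.V, P.V', P.v, P.e, P.e', P.hv⟩

def Lift2Dat.snd {g : U ⟶ U'} {f : U' ⟶ U''} (P : Lift2Dat φ g f) : LiftDat φ f :=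
  ⟨P.i, P.V', P.V'', P.v', P.e', P.e'', P.hv'⟩

def Lift2Dat.cmp {g : U ⟶ U'} {f : U' ⟶ U''} (P : Lift2Dat φ g f) :
    LiftDat φ (g ≫ f) :=
  ⟨P.i, P.V, P.V'', P.v ≫ P.v', P.e, P.e'', by
    rw [(φ P.i).map_comp]; exact heq_comp P.e P.e' P.e'' P.hv P.hv'⟩

def LiftDat.idl (i : ι) (V : 𝒱 i) (e : (φ i).obj V = U) : LiftDat φ (𝟙 U) :=
  ⟨i, V, V, 𝟙 V, e, e, by rw [(φ i).map_id]; exact heq_id e⟩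

noncomputable def Lift2Dat.mk' {g : U ⟶ U'} {f : U' ⟶ U''}
    (h : ∃ i, ∃ V V' V'' : 𝒱 i, ∃ v : V ⟶ V', ∃ v' : V' ⟶ V'',
      ∃ _ : (φ i).obj V = U, ∃ _ : (φ i).obj V' = U', ∃ _ : (φ i).obj V'' = U'',
      HEq ((φ i).map v) g ∧ HEq ((φ i).map v') f) : Lift2Dat φ g f := by
  choose i V V' V'' v v' e e' e'' hv using h
  exact ⟨i, V, V', V'', v, v', e, e', e'', hv.1, hv.2⟩

variable (c0 : ∀ U : 𝒰, ObjDat φ U) (c1 : ∀ {U U' : 𝒰} (f : U ⟶ U'), LiftDat φ f)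
  (c2 : ∀ {U U' U'' : 𝒰} (g : U ⟶ U') (f : U' ⟶ U''), Lift2Dat φ g f)

/-- The representative of a descended object in the chart `(i, V)`. -/
def rObj {U : 𝒰} (i : ι) (V : 𝒱 i) (e : (φ i).obj V = U)
    (B : (𝔟 (c0 U).i).Obj (c0 U).V) : (𝔟 i).Obj V :=
  tObj 𝔟 ρ (c0 U).i i ((c0 U).e.trans e.symm) B

/-- The descended graded `Hom`-modules. -/
def DHom {U U' : 𝒰} (f : U ⟶ U') (B : (𝔟 (c0 U).i).Obj (c0 U).V)
    (B' : (𝔟 (c0 U').i).Obj (c0 U').V) : ModuleCat.{u} k :=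
  (𝔟 (c1 f).i).Hom (c1 f).v (rObj 𝔟 ρ c0 (c1 f).i (c1 f).V (c1 f).e B)
    (rObj 𝔟 ρ c0 (c1 f).i (c1 f).V' (c1 f).e' B')

/-- Transport of descended morphisms between two lifts of the same base morphism. -/
def SMor (hobjCoc' : ∀ (i j l : ι) (V₁ : 𝒱 i) (V₂ : 𝒱 j) (V₃ : 𝒱 l)
    (h₁₂ : (φ i).obj V₁ = (φ j).obj V₂) (h₂₃ : (φ j).obj V₂ = (φ l).obj V₃)
    (B : (𝔟 i).Obj V₁),
    (ρ j l).obj (V := ⟨V₂, V₃, h₂₃⟩) ((ρ i j).obj (V := ⟨V₁, V₂, h₁₂⟩) B) =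
      (ρ i l).obj (V := ⟨V₁, V₃, h₁₂.trans h₂₃⟩) B)
    {U U' : 𝒰} {f : U ⟶ U'} (L M : LiftDat φ f)
    {B : (𝔟 (c0 U).i).Obj (c0 U).V} {B' : (𝔟 (c0 U').i).Obj (c0 U').V}
    (x : (𝔟 L.i).Hom L.v (rObj 𝔟 ρ c0 L.i L.V L.e B)
      (rObj 𝔟 ρ c0 L.i L.V' L.e' B')) :
    (𝔟 M.i).Hom M.v (rObj 𝔟 ρ c0 M.i M.V M.e B)
      (rObj 𝔟 ρ c0 M.i M.V' M.e' B') :=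
  (𝔟 M.i).mcast rfl rfl HEq.rfl
    (heq_of_eq (tObj_coc 𝔟 ρ hobjCoc' (c0 U).i L.i M.i
      ((c0 U).e.trans L.e.symm) (L.e.trans M.e.symm) B))
    (heq_of_eq (tObj_coc 𝔟 ρ hobjCoc' (c0 U').i L.i M.i
      ((c0 U').e.trans L.e'.symm) (L.e'.trans M.e'.symm) B'))
    (tMor 𝔟 ρ L.i M.i (L.e.trans M.e.symm) (L.e'.trans M.e'.symm) L.v M.v
      (eq_conj_of_heq (L.e.trans M.e.symm) (L.e'.trans M.e'.symm)
        (L.hv.trans M.hv.symm)) x)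

theorem SMor_tMor (hobjCoc' : ∀ (i j l : ι) (V₁ : 𝒱 i) (V₂ : 𝒱 j) (V₃ : 𝒱 l)
    (h₁₂ : (φ i).obj V₁ = (φ j).obj V₂) (h₂₃ : (φ j).obj V₂ = (φ l).obj V₃)
    (B : (𝔟 i).Obj V₁),
    (ρ j l).obj (V := ⟨V₂, V₃, h₂₃⟩) ((ρ i j).obj (V := ⟨V₁, V₂, h₁₂⟩) B) =
      (ρ i l).obj (V := ⟨V₁, V₃, h₁₂.trans h₂₃⟩) B)
    {U U' : 𝒰} {f : U ⟶ U'} (L M : LiftDat φ f)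
    {B : (𝔟 (c0 U).i).Obj (c0 U).V} {B' : (𝔟 (c0 U').i).Obj (c0 U').V}
    (x : (𝔟 L.i).Hom L.v (rObj 𝔟 ρ c0 L.i L.V L.e B)
      (rObj 𝔟 ρ c0 L.i L.V' L.e' B')) :
    HEq (SMor 𝔟 ρ c0 hobjCoc' L M x)
      (tMor 𝔟 ρ L.i M.i (L.e.trans M.e.symm) (L.e'.trans M.e'.symm) L.v M.v
        (eq_conj_of_heq (L.e.trans M.e.symm) (L.e'.trans M.e'.symm)
          (L.hv.trans M.hv.symm)) x) :=
  (𝔟 M.i).mcast_heq _ _ _ _ _ _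

include hobjCoc hmorCoc in
theorem SMor_coc {U U' : 𝒰} {f : U ⟶ U'} (L M N : LiftDat φ f)
    {B : (𝔟 (c0 U).i).Obj (c0 U).V} {B' : (𝔟 (c0 U').i).Obj (c0 U').V}
    (x : (𝔟 L.i).Hom L.v (rObj 𝔟 ρ c0 L.i L.V L.e B)
      (rObj 𝔟 ρ c0 L.i L.V' L.e' B')) :
    SMor 𝔟 ρ c0 hobjCoc M N (SMor 𝔟 ρ c0 hobjCoc L M x) =
      SMor 𝔟 ρ c0 hobjCoc L N x := by
  apply eq_of_heq
  refine (SMor_tMor 𝔟 ρ c0 hobjCoc M N (SMor 𝔟 ρ c0 hobjCoc L M x)).trans ?_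
  refine HEq.trans ((ρ M.i N.i).map_congr'' rfl rfl HEq.rfl
    (heq_of_eq (tObj_coc 𝔟 ρ hobjCoc (c0 U).i L.i M.i
      ((c0 U).e.trans L.e.symm) (L.e.trans M.e.symm) B)).symm
    (heq_of_eq (tObj_coc 𝔟 ρ hobjCoc (c0 U').i L.i M.i
      ((c0 U').e.trans L.e'.symm) (L.e'.trans M.e'.symm) B')).symm
    (SMor_tMor 𝔟 ρ c0 hobjCoc L M x)) ?_
  refine HEq.trans (tMor_coc 𝔟 ρ hmorCoc L.i M.i N.i
    (L.e.trans M.e.symm) (L.e'.trans M.e'.symm)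
    (M.e.trans N.e.symm) (M.e'.trans N.e'.symm) L.v M.v N.v
    (eq_conj_of_heq (L.e.trans M.e.symm) (L.e'.trans M.e'.symm)
      (L.hv.trans M.hv.symm))
    (eq_conj_of_heq (M.e.trans N.e.symm) (M.e'.trans N.e'.symm)
      (M.hv.trans N.hv.symm))
    (eq_conj_of_heq ((L.e.trans M.e.symm).trans (M.e.trans N.e.symm))
      ((L.e'.trans M.e'.symm).trans (M.e'.trans N.e'.symm))
      (L.hv.trans N.hv.symm)) x) ?_
  exact (SMor_tMor 𝔟 ρ c0 hobjCoc L N x).symm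

include hsub in
theorem SMor_bij {U U' : 𝒰} {f : U ⟶ U'} (L M : LiftDat φ f)
    (B : (𝔟 (c0 U).i).Obj (c0 U).V) (B' : (𝔟 (c0 U').i).Obj (c0 U').V) :
    Function.Bijective (SMor 𝔟 ρ c0 hobjCoc L M (B := B) (B' := B')) :=
  ((𝔟 M.i).mcast_bijective _ _ _ _ _).comp
    (tMor_bij 𝔟 ρ hsub L.i M.i (L.e.trans M.e.symm) (L.e'.trans M.e'.symm)
      L.v M.v (eq_conj_of_heq (L.e.trans M.e.symm) (L.e'.trans M.e'.symm)
        (L.hv.trans M.hv.symm)) _ _)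

include hsub hobjCoc hmorCoc in
theorem SMor_self {U U' : 𝒰} {f : U ⟶ U'} (L : LiftDat φ f)
    {B : (𝔟 (c0 U).i).Obj (c0 U).V} {B' : (𝔟 (c0 U').i).Obj (c0 U').V}
    (x : (𝔟 L.i).Hom L.v (rObj 𝔟 ρ c0 L.i L.V L.e B)
      (rObj 𝔟 ρ c0 L.i L.V' L.e' B')) :
    SMor 𝔟 ρ c0 hobjCoc L L x = x :=
  (SMor_bij 𝔟 ρ hsub hobjCoc c0 L L B B').injective
    (SMor_coc 𝔟 ρ hobjCoc hmorCoc c0 L L L x)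

theorem SMor_congr {U U' : 𝒰} {f : U ⟶ U'} (L M : LiftDat φ f)
    {B₁ B₂ : (𝔟 (c0 U).i).Obj (c0 U).V} {B₁' B₂' : (𝔟 (c0 U').i).Obj (c0 U').V}
    (hB : B₁ = B₂) (hB' : B₁' = B₂')
    {x : (𝔟 L.i).Hom L.v (rObj 𝔟 ρ c0 L.i L.V L.e B₁)
      (rObj 𝔟 ρ c0 L.i L.V' L.e' B₁')}
    {y : (𝔟 L.i).Hom L.v (rObj 𝔟 ρ c0 L.i L.V L.e B₂)
      (rObj 𝔟 ρ c0 L.i L.V' L.e' B₂')} (hxy : HEq x y) :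
    HEq (SMor 𝔟 ρ c0 hobjCoc L M x) (SMor 𝔟 ρ c0 hobjCoc L M y) := by
  subst hB; subst hB'; cases hxy; rfl

theorem SMor_add {U U' : 𝒰} {f : U ⟶ U'} (L M : LiftDat φ f)
    {B : (𝔟 (c0 U).i).Obj (c0 U).V} {B' : (𝔟 (c0 U').i).Obj (c0 U').V}
    (x y : (𝔟 L.i).Hom L.v (rObj 𝔟 ρ c0 L.i L.V L.e B)
      (rObj 𝔟 ρ c0 L.i L.V' L.e' B')) :
    SMor 𝔟 ρ c0 hobjCoc L M (x + y) =
      SMor 𝔟 ρ c0 hobjCoc L M x + SMor 𝔟 ρ c0 hobjCoc L M y := by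
  dsimp only [SMor, tMor]
  erw [(ρ L.i M.i).map_add, (𝔟 M.i).mcast_add]

theorem SMor_smul {U U' : 𝒰} {f : U ⟶ U'} (L M : LiftDat φ f)
    {B : (𝔟 (c0 U).i).Obj (c0 U).V} {B' : (𝔟 (c0 U').i).Obj (c0 U').V}
    (r : k) (x : (𝔟 L.i).Hom L.v (rObj 𝔟 ρ c0 L.i L.V L.e B)
      (rObj 𝔟 ρ c0 L.i L.V' L.e' B')) :
    SMor 𝔟 ρ c0 hobjCoc L M (r • x) = r • SMor 𝔟 ρ c0 hobjCoc L M x := by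
  dsimp only [SMor, tMor]
  erw [(ρ L.i M.i).map_smul, (𝔟 M.i).mcast_smul]

include hobjCoc in
theorem SMor_id {U : 𝒰} (i : ι) (V : 𝒱 i) (e : (φ i).obj V = U) (j : ι) (W : 𝒱 j)
    (e' : (φ j).obj W = U) (B : (𝔟 (c0 U).i).Obj (c0 U).V) :
    SMor 𝔟 ρ c0 hobjCoc (LiftDat.idl i V e) (LiftDat.idl j W e')
      ((𝔟 i).id (rObj 𝔟 ρ c0 i V e B)) = (𝔟 j).id (rObj 𝔟 ρ c0 j W e' B) := by
  apply eq_of_heq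
  refine (SMor_tMor 𝔟 ρ c0 hobjCoc (LiftDat.idl i V e) (LiftDat.idl j W e')
    ((𝔟 i).id (rObj 𝔟 ρ c0 i V e B))).trans ?_
  refine HEq.trans ((ρ i j).map_id (V := ⟨V, W, e.trans e'.symm⟩)
    (rObj 𝔟 ρ c0 i V e B)) ?_
  refine ((𝔟 j).Hcast_heq
    ((pbSndF (φ i) (φ j)).map_id (⟨V, W, e.trans e'.symm⟩ : CatPB _ _)).symm
    ((𝔟 j).id ((ρ i j).obj (V := ⟨V, W, e.trans e'.symm⟩)
      (rObj 𝔟 ρ c0 i V e B)))).trans ?_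
  exact (𝔟 j).id_congr rfl (heq_of_eq (tObj_coc 𝔟 ρ hobjCoc (c0 U).i i j
    ((c0 U).e.trans e.symm) (e.trans e'.symm) B))

include hobjCoc in
theorem SMor_comp {U U' U'' : 𝒰} (g : U ⟶ U') (f : U' ⟶ U'') (P Q : Lift2Dat φ g f)
    {C : (𝔟 (c0 U).i).Obj (c0 U).V} {B : (𝔟 (c0 U').i).Obj (c0 U').V}
    {A : (𝔟 (c0 U'').i).Obj (c0 U'').V}
    (x : (𝔟 P.i).Hom P.v' (rObj 𝔟 ρ c0 P.i P.V' P.e' B)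
      (rObj 𝔟 ρ c0 P.i P.V'' P.e'' A))
    (y : (𝔟 P.i).Hom P.v (rObj 𝔟 ρ c0 P.i P.V P.e C)
      (rObj 𝔟 ρ c0 P.i P.V' P.e' B)) :
    SMor 𝔟 ρ c0 hobjCoc P.cmp Q.cmp ((𝔟 P.i).comp x y) =
      (𝔟 Q.i).comp (SMor 𝔟 ρ c0 hobjCoc P.snd Q.snd x)
        (SMor 𝔟 ρ c0 hobjCoc P.fst Q.fst y) := by
  apply eq_of_heq
  refine (SMor_tMor 𝔟 ρ c0 hobjCoc P.cmp Q.cmp ((𝔟 P.i).comp x y)).trans ?_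
  refine HEq.trans ((ρ P.i Q.i).map_comp
    (f := (⟨(P.v', Q.v'), eq_conj_of_heq (P.e'.trans Q.e'.symm)
        (P.e''.trans Q.e''.symm) (P.hv'.trans Q.hv'.symm)⟩ :
      (⟨P.V', Q.V', P.e'.trans Q.e'.symm⟩ : CatPB (φ P.i) (φ Q.i)) ⟶
        ⟨P.V'', Q.V'', P.e''.trans Q.e''.symm⟩))
    (g := (⟨(P.v, Q.v), eq_conj_of_heq (P.e.trans Q.e.symm)
        (P.e'.trans Q.e'.symm) (P.hv.trans Q.hv.symm)⟩ :
      (⟨P.V, Q.V, P.e.trans Q.e.symm⟩ : CatPB (φ P.i) (φ Q.i)) ⟶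
        ⟨P.V', Q.V', P.e'.trans Q.e'.symm⟩))
    x y) ?_
  exact (𝔟 Q.i).comp_congr'_s10 rfl rfl rfl HEq.rfl HEq.rfl
    (heq_of_eq (tObj_coc 𝔟 ρ hobjCoc (c0 U).i P.i Q.i
      ((c0 U).e.trans P.e.symm) (P.e.trans Q.e.symm) C))
    (heq_of_eq (tObj_coc 𝔟 ρ hobjCoc (c0 U').i P.i Q.i
      ((c0 U').e.trans P.e'.symm) (P.e'.trans Q.e'.symm) B))
    (heq_of_eq (tObj_coc 𝔟 ρ hobjCoc (c0 U'').i P.i Q.i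
      ((c0 U'').e.trans P.e''.symm) (P.e''.trans Q.e''.symm) A))
    (SMor_tMor 𝔟 ρ c0 hobjCoc P.snd Q.snd x).symm
    (SMor_tMor 𝔟 ρ c0 hobjCoc P.fst Q.fst y).symm

/-- The descended composition. -/
def Dcomp {X Y Z : 𝒰} {f : Y ⟶ Z} {g : X ⟶ Y} {C : (𝔟 (c0 X).i).Obj (c0 X).V}
    {B : (𝔟 (c0 Y).i).Obj (c0 Y).V} {A : (𝔟 (c0 Z).i).Obj (c0 Z).V}
    (x : DHom 𝔟 ρ c0 @c1 f B A) (y : DHom 𝔟 ρ c0 @c1 g C B) :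
    DHom 𝔟 ρ c0 @c1 (g ≫ f) C A :=
  SMor 𝔟 ρ c0 hobjCoc (c2 g f).cmp (c1 (g ≫ f))
    ((𝔟 (c2 g f).i).comp (SMor 𝔟 ρ c0 hobjCoc (c1 f) (c2 g f).snd x)
      (SMor 𝔟 ρ c0 hobjCoc (c1 g) (c2 g f).fst y))

/-- The descended identities. -/
def Did {U : 𝒰} (A : (𝔟 (c0 U).i).Obj (c0 U).V) : DHom 𝔟 ρ c0 @c1 (𝟙 U) A A :=
  SMor 𝔟 ρ c0 hobjCoc (LiftDat.idl (c0 U).i (c0 U).V (c0 U).e) (c1 (𝟙 U))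
    ((𝔟 (c0 U).i).id (rObj 𝔟 ρ c0 (c0 U).i (c0 U).V (c0 U).e A))

include hobjCoc hmorCoc in
theorem Dcomp_spec {X Y Z : 𝒰} (g : X ⟶ Y) (f : Y ⟶ Z) (Q : Lift2Dat φ g f)
    {C : (𝔟 (c0 X).i).Obj (c0 X).V} {B : (𝔟 (c0 Y).i).Obj (c0 Y).V}
    {A : (𝔟 (c0 Z).i).Obj (c0 Z).V}
    (x : DHom 𝔟 ρ c0 @c1 f B A) (y : DHom 𝔟 ρ c0 @c1 g C B) :
    SMor 𝔟 ρ c0 hobjCoc (c1 (g ≫ f)) Q.cmp (Dcomp 𝔟 ρ hobjCoc c0 @c1 @c2 x y) =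
      (𝔟 Q.i).comp (SMor 𝔟 ρ c0 hobjCoc (c1 f) Q.snd x)
        (SMor 𝔟 ρ c0 hobjCoc (c1 g) Q.fst y) := by
  refine (SMor_coc 𝔟 ρ hobjCoc hmorCoc c0 (c2 g f).cmp (c1 (g ≫ f)) Q.cmp _).trans ?_
  refine (SMor_comp 𝔟 ρ hobjCoc c0 g f (c2 g f) Q _ _).trans ?_
  rw [SMor_coc 𝔟 ρ hobjCoc hmorCoc c0 (c1 f) (c2 g f).snd Q.snd x,
    SMor_coc 𝔟 ρ hobjCoc hmorCoc c0 (c1 g) (c2 g f).fst Q.fst y]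

include hsub in
theorem Dheq_master {X₁ Y₁ X₂ Y₂ : 𝒰} (hX : X₁ = X₂) (hY : Y₁ = Y₂)
    {f₁ : X₁ ⟶ Y₁} {f₂ : X₂ ⟶ Y₂} (hf : HEq f₁ f₂)
    {B₁ : (𝔟 (c0 X₁).i).Obj (c0 X₁).V} {A₁ : (𝔟 (c0 Y₁).i).Obj (c0 Y₁).V}
    {B₂ : (𝔟 (c0 X₂).i).Obj (c0 X₂).V} {A₂ : (𝔟 (c0 Y₂).i).Obj (c0 Y₂).V}
    (hB : HEq B₁ B₂) (hA : HEq A₁ A₂)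
    (z : DHom 𝔟 ρ c0 @c1 f₁ B₁ A₁) (w : DHom 𝔟 ρ c0 @c1 f₂ B₂ A₂)
    (L : LiftDat φ f₁) (M : LiftDat φ f₂) (hi : L.i = M.i) (hV : HEq L.V M.V)
    (hV' : HEq L.V' M.V') (hv : HEq L.v M.v)
    (hzw : HEq (SMor 𝔟 ρ c0 hobjCoc (c1 f₁) L z)
      (SMor 𝔟 ρ c0 hobjCoc (c1 f₂) M w)) : HEq z w := by
  subst hX; subst hY; cases hf; cases hB; cases hA
  obtain ⟨Li, LV, LV', Lv, Le, Le', Lhv⟩ := L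
  obtain ⟨Mi, MV, MV', Mv, Me, Me', Mhv⟩ := M
  dsimp only at hi hV hV' hv
  subst hi; cases hV; cases hV'; cases hv
  exact heq_of_eq ((SMor_bij 𝔟 ρ hsub hobjCoc c0 (c1 f₁)
    ⟨Li, LV, LV', Lv, Le, Le', Lhv⟩ _ _).injective (eq_of_heq hzw))

def Lift2Dat.ofIdLeft {U U' : 𝒰} {f : U ⟶ U'} (L : LiftDat φ f) :
    Lift2Dat φ (𝟙 U) f :=
  ⟨L.i, L.V, L.V, L.V', 𝟙 L.V, L.v, L.e, L.e, L.e',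
    by rw [(φ L.i).map_id]; exact heq_id L.e, L.hv⟩

def Lift2Dat.ofIdRight {U U' : 𝒰} {f : U ⟶ U'} (L : LiftDat φ f) :
    Lift2Dat φ f (𝟙 U') :=
  ⟨L.i, L.V, L.V', L.V', L.v, 𝟙 L.V', L.e, L.e', L.e', L.hv,
    by rw [(φ L.i).map_id]; exact heq_id L.e'⟩

/-- The descended graded category. -/
def Dcat (h3 : ∀ s : NerveTot 𝒰 3, ∃ i, ∃ t : NerveTot (𝒱 i) 3,
    NerveTot.map (φ i) t = s) : GradedCat k 𝒰 where
  Obj U := (𝔟 (c0 U).i).Obj (c0 U).V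
  Hom f B B' := DHom 𝔟 ρ c0 @c1 f B B'
  comp x y := Dcomp 𝔟 ρ hobjCoc c0 @c1 @c2 x y
  id A := Did 𝔟 ρ hobjCoc c0 @c1 A
  comp_add_left := by
    intro X Y Z f g C B A x x' y
    dsimp only [Dcomp]
    erw [SMor_add 𝔟 ρ hobjCoc c0 (c1 f) (c2 g f).snd x x',
      (𝔟 (c2 g f).i).comp_add_left, SMor_add]
    rfl
  comp_add_right := by
    intro X Y Z f g C B A x y y'
    dsimp only [Dcomp]
    erw [SMor_add 𝔟 ρ hobjCoc c0 (c1 g) (c2 g f).fst y y',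
      (𝔟 (c2 g f).i).comp_add_right, SMor_add]
    rfl
  comp_smul_left := by
    intro X Y Z f g C B A r x y
    dsimp only [Dcomp]
    erw [SMor_smul 𝔟 ρ hobjCoc c0 (c1 f) (c2 g f).snd r x,
      (𝔟 (c2 g f).i).comp_smul_left, SMor_smul]
    rfl
  comp_smul_right := by
    intro X Y Z f g C B A r x y
    dsimp only [Dcomp]
    erw [SMor_smul 𝔟 ρ hobjCoc c0 (c1 g) (c2 g f).fst r y,
      (𝔟 (c2 g f).i).comp_smul_right, SMor_smul]
    rfl
  comp_id := by
    intro X Y f B A x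
    let Q : Lift2Dat φ (𝟙 X) f := Lift2Dat.ofIdLeft (c1 f)
    have e1 := Dcomp_spec 𝔟 ρ hobjCoc hmorCoc c0 @c1 @c2 (𝟙 X) f Q x
      (Did 𝔟 ρ hobjCoc c0 @c1 B)
    have e2 : SMor 𝔟 ρ c0 hobjCoc (c1 (𝟙 X)) Q.fst
        (Did 𝔟 ρ hobjCoc c0 @c1 B) =
        (𝔟 (c1 f).i).id (rObj 𝔟 ρ c0 (c1 f).i (c1 f).V (c1 f).e B) := by
      refine Eq.trans (SMor_coc 𝔟 ρ hobjCoc hmorCoc c0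
        (LiftDat.idl (c0 X).i (c0 X).V (c0 X).e) (c1 (𝟙 X)) Q.fst _) ?_
      exact SMor_id 𝔟 ρ hobjCoc c0 (c0 X).i (c0 X).V (c0 X).e (c1 f).i (c1 f).V
        (c1 f).e B
    refine Dheq_master 𝔟 ρ hsub hobjCoc c0 @c1 rfl rfl
      (heq_of_eq (Category.id_comp f)) HEq.rfl HEq.rfl _ _ Q.cmp (c1 f) rfl
      HEq.rfl HEq.rfl (heq_of_eq (Category.id_comp (c1 f).v)) ?_
    refine (heq_of_eq (e1.trans (congrArg
      (fun w => (𝔟 Q.i).comp (SMor 𝔟 ρ c0 hobjCoc (c1 f) Q.snd x) w) e2))).trans ?_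
    refine ((𝔟 (c1 f).i).comp_id (SMor 𝔟 ρ c0 hobjCoc (c1 f) Q.snd x)).trans ?_
    exact HEq.rfl
  id_comp := by
    intro X Y f B A x
    let Q : Lift2Dat φ f (𝟙 Y) := Lift2Dat.ofIdRight (c1 f)
    have e1 := Dcomp_spec 𝔟 ρ hobjCoc hmorCoc c0 @c1 @c2 f (𝟙 Y) Q
      (Did 𝔟 ρ hobjCoc c0 @c1 A) x
    have e2 : SMor 𝔟 ρ c0 hobjCoc (c1 (𝟙 Y)) Q.snd
        (Did 𝔟 ρ hobjCoc c0 @c1 A) =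
        (𝔟 (c1 f).i).id (rObj 𝔟 ρ c0 (c1 f).i (c1 f).V' (c1 f).e' A) := by
      refine Eq.trans (SMor_coc 𝔟 ρ hobjCoc hmorCoc c0
        (LiftDat.idl (c0 Y).i (c0 Y).V (c0 Y).e) (c1 (𝟙 Y)) Q.snd _) ?_
      exact SMor_id 𝔟 ρ hobjCoc c0 (c0 Y).i (c0 Y).V (c0 Y).e (c1 f).i (c1 f).V'
        (c1 f).e' A
    refine Dheq_master 𝔟 ρ hsub hobjCoc c0 @c1 rfl rfl
      (heq_of_eq (Category.comp_id f)) HEq.rfl HEq.rfl _ _ Q.cmp (c1 f) rfl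
      HEq.rfl HEq.rfl (heq_of_eq (Category.comp_id (c1 f).v)) ?_
    refine (heq_of_eq (e1.trans (congrArg
      (fun w => (𝔟 Q.i).comp w (SMor 𝔟 ρ c0 hobjCoc (c1 f) Q.fst x)) e2))).trans ?_
    refine ((𝔟 (c1 f).i).id_comp (SMor 𝔟 ρ c0 hobjCoc (c1 f) Q.fst x)).trans ?_
    exact HEq.rfl
  assoc := by
    intro W X Y Z f g h D C B A x y z
    obtain ⟨m, V₀, V₁, V₂, V₃, t₁, t₂, t₃, e₀, e₁, e₂, e₃, ht₁, ht₂, ht₃⟩ :=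
      lift3 h3 h g f
    have hv23 : HEq ((φ m).map (t₂ ≫ t₃)) (g ≫ f) := by
      rw [(φ m).map_comp]; exact heq_comp e₁ e₂ e₃ ht₂ ht₃
    have hv12 : HEq ((φ m).map (t₁ ≫ t₂)) (h ≫ g) := by
      rw [(φ m).map_comp]; exact heq_comp e₀ e₁ e₂ ht₁ ht₂
    let R23 : Lift2Dat φ g f := ⟨m, V₁, V₂, V₃, t₂, t₃, e₁, e₂, e₃, ht₂, ht₃⟩
    let R12 : Lift2Dat φ h g := ⟨m, V₀, V₁, V₂, t₁, t₂, e₀, e₁, e₂, ht₁, ht₂⟩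
    let R1_23 : Lift2Dat φ h (g ≫ f) :=
      ⟨m, V₀, V₁, V₃, t₁, t₂ ≫ t₃, e₀, e₁, e₃, ht₁, hv23⟩
    let R12_3 : Lift2Dat φ (h ≫ g) f :=
      ⟨m, V₀, V₂, V₃, t₁ ≫ t₂, t₃, e₀, e₂, e₃, hv12, ht₃⟩
    have e1 := Dcomp_spec 𝔟 ρ hobjCoc hmorCoc c0 @c1 @c2 h (g ≫ f) R1_23
      (Dcomp 𝔟 ρ hobjCoc c0 @c1 @c2 x y) z
    have e2 : SMor 𝔟 ρ c0 hobjCoc (c1 (g ≫ f)) R1_23.snd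
        (Dcomp 𝔟 ρ hobjCoc c0 @c1 @c2 x y) =
        (𝔟 m).comp (SMor 𝔟 ρ c0 hobjCoc (c1 f) R23.snd x)
          (SMor 𝔟 ρ c0 hobjCoc (c1 g) R23.fst y) :=
      Dcomp_spec 𝔟 ρ hobjCoc hmorCoc c0 @c1 @c2 g f R23 x y
    have e3 := Dcomp_spec 𝔟 ρ hobjCoc hmorCoc c0 @c1 @c2 (h ≫ g) f R12_3 x
      (Dcomp 𝔟 ρ hobjCoc c0 @c1 @c2 y z)
    have e4 : SMor 𝔟 ρ c0 hobjCoc (c1 (h ≫ g)) R12_3.fst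
        (Dcomp 𝔟 ρ hobjCoc c0 @c1 @c2 y z) =
        (𝔟 m).comp (SMor 𝔟 ρ c0 hobjCoc (c1 g) R12.snd y)
          (SMor 𝔟 ρ c0 hobjCoc (c1 h) R12.fst z) :=
      Dcomp_spec 𝔟 ρ hobjCoc hmorCoc c0 @c1 @c2 h g R12 y z
    refine Dheq_master 𝔟 ρ hsub hobjCoc c0 @c1 rfl rfl
      (heq_of_eq (Category.assoc h g f).symm) HEq.rfl HEq.rfl _ _
      R1_23.cmp R12_3.cmp rfl HEq.rfl HEq.rfl
      (heq_of_eq (Category.assoc t₁ t₂ t₃).symm) ?_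
    refine (heq_of_eq (e1.trans (congrArg
      (fun w => (𝔟 m).comp w (SMor 𝔟 ρ c0 hobjCoc (c1 h) R1_23.fst z)) e2))).trans ?_
    refine HEq.trans ((𝔟 m).assoc (SMor 𝔟 ρ c0 hobjCoc (c1 f) R23.snd x)
      (SMor 𝔟 ρ c0 hobjCoc (c1 g) R23.fst y)
      (SMor 𝔟 ρ c0 hobjCoc (c1 h) R1_23.fst z)) ?_
    exact (heq_of_eq (e3.trans (congrArg
      (fun w => (𝔟 m).comp (SMor 𝔟 ρ c0 hobjCoc (c1 f) R12_3.snd x) w) e4))).symm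

include hobjCoc in
theorem tObj_congr (i : ι) {j₁ j₂ : ι} (hj : j₁ = j₂) {V : 𝒱 i} {W₁ : 𝒱 j₁}
    {W₂ : 𝒱 j₂} (hW : HEq W₁ W₂) (e₁ : (φ i).obj V = (φ j₁).obj W₁)
    (e₂ : (φ i).obj V = (φ j₂).obj W₂) (B : (𝔟 i).Obj V) :
    HEq (tObj 𝔟 ρ i j₁ e₁ B) (tObj 𝔟 ρ i j₂ e₂ B) := by
  subst hj; cases hW; exact HEq.rfl

def LiftDat.can (i : ι) {V V' : 𝒱 i} (v : V ⟶ V') : LiftDat φ ((φ i).map v) :=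
  ⟨i, V, V', v, rfl, rfl, HEq.rfl⟩

/-- The comparison functor on objects. -/
def sObj (i : ι) {V : 𝒱 i} (B : (𝔟 i).Obj V) :
    (𝔟 (c0 ((φ i).obj V)).i).Obj (c0 ((φ i).obj V)).V :=
  tObj 𝔟 ρ i (c0 ((φ i).obj V)).i (c0 ((φ i).obj V)).e.symm B

include hobjCoc in
theorem rObj_sObj (i : ι) {V : 𝒱 i} (j : ι) (W : 𝒱 j)
    (e : (φ j).obj W = (φ i).obj V) (B : (𝔟 i).Obj V) :
    rObj 𝔟 ρ c0 j W e (sObj 𝔟 ρ c0 i B) = tObj 𝔟 ρ i j e.symm B :=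
  tObj_coc 𝔟 ρ hobjCoc i (c0 ((φ i).obj V)).i j (c0 ((φ i).obj V)).e.symm
    ((c0 ((φ i).obj V)).e.trans e.symm) B

include hbij hobjCoc in
theorem rObj_sObj_self (i : ι) {V : 𝒱 i} (e : (φ i).obj V = (φ i).obj V)
    (B : (𝔟 i).Obj V) :
    rObj 𝔟 ρ c0 i V e (sObj 𝔟 ρ c0 i B) = B :=
  (rObj_sObj 𝔟 ρ hobjCoc c0 i i V e B).trans (tObj_self 𝔟 ρ hbij hobjCoc i e.symm B)

include hbij hobjCoc in
theorem sObj_compat (i j : ι) {Vl : 𝒱 i} {Vr : 𝒱 j}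
    (e : (φ i).obj Vl = (φ j).obj Vr) (B : (𝔟 i).Obj Vl) :
    HEq (sObj 𝔟 ρ c0 j (tObj 𝔟 ρ i j e B)) (sObj 𝔟 ρ c0 i B) := by
  refine HEq.trans (heq_of_eq (tObj_coc 𝔟 ρ hobjCoc i j
    (c0 ((φ j).obj Vr)).i e (c0 ((φ j).obj Vr)).e.symm B)) ?_
  exact tObj_congr 𝔟 ρ hobjCoc i (congrArg (fun u => (c0 u).i) e.symm)
    (heq_dep (fun u => (c0 u).V) e.symm) _ _ B

/-- The comparison functor on graded morphisms. -/
def sMap (i : ι) {V V' : 𝒱 i} (v : V ⟶ V') {B : (𝔟 i).Obj V} {B' : (𝔟 i).Obj V'}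
    (x : (𝔟 i).Hom v B B') :
    DHom 𝔟 ρ c0 @c1 ((φ i).map v) (sObj 𝔟 ρ c0 i B) (sObj 𝔟 ρ c0 i B') :=
  SMor 𝔟 ρ c0 hobjCoc (LiftDat.can i v) (c1 ((φ i).map v))
    ((𝔟 i).mcast rfl rfl HEq.rfl
      (heq_of_eq (rObj_sObj_self 𝔟 ρ hbij hobjCoc c0 i rfl B)).symm
      (heq_of_eq (rObj_sObj_self 𝔟 ρ hbij hobjCoc c0 i rfl B')).symm x)

include hbij in
theorem sObj_bij (i : ι) (V : 𝒱 i) :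
    Function.Bijective (sObj 𝔟 ρ c0 i (V := V)) :=
  tObj_bij 𝔟 ρ hbij i (c0 ((φ i).obj V)).i (c0 ((φ i).obj V)).e.symm

include hbij hsub hobjCoc in
theorem sMap_bij (i : ι) {V V' : 𝒱 i} (v : V ⟶ V') (B : (𝔟 i).Obj V)
    (B' : (𝔟 i).Obj V') :
    Function.Bijective (sMap 𝔟 ρ hbij hobjCoc c0 @c1 i v (B := B) (B' := B')) :=
  (SMor_bij 𝔟 ρ hsub hobjCoc c0 (LiftDat.can i v) (c1 ((φ i).map v)) _ _).comp
    ((𝔟 i).mcast_bijective rfl rfl HEq.rfl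
      (heq_of_eq (rObj_sObj_self 𝔟 ρ hbij hobjCoc c0 i rfl B)).symm
      (heq_of_eq (rObj_sObj_self 𝔟 ρ hbij hobjCoc c0 i rfl B')).symm)

/-- The comparison graded functor into the descended graded category. -/
def Sfun (h3 : ∀ s : NerveTot 𝒰 3, ∃ i, ∃ t : NerveTot (𝒱 i) 3,
    NerveTot.map (φ i) t = s) (i : ι) :
    GradedFunctor k (𝟭 (𝒱 i)) (𝔟 i)
      ((Dcat 𝔟 ρ hsub hobjCoc hmorCoc c0 @c1 @c2 h3).restrict (φ i)) where
  obj B := sObj 𝔟 ρ c0 i B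
  map := fun {V V'} v {B B'} x => sMap 𝔟 ρ hbij hobjCoc c0 @c1 i v x
  map_add := by
    intro V V' v B B' x y
    dsimp only [sMap]
    erw [(𝔟 i).mcast_add, SMor_add]
    rfl
  map_smul := by
    intro V V' v B B' r x
    dsimp only [sMap]
    erw [(𝔟 i).mcast_smul, SMor_smul]
    rfl
  map_id := by
    intro V B
    refine HEq.trans ?_
      ((Dcat 𝔟 ρ hsub hobjCoc hmorCoc c0 @c1 @c2 h3).Hcast_heq
        ((φ i).map_id V).symm (Did 𝔟 ρ hobjCoc c0 @c1 (sObj 𝔟 ρ c0 i B))).symm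
    refine Dheq_master 𝔟 ρ hsub hobjCoc c0 @c1 rfl rfl
      (heq_of_eq ((φ i).map_id V)) HEq.rfl HEq.rfl _ _
      (LiftDat.can i (𝟙 V)) (LiftDat.idl i V rfl) rfl HEq.rfl HEq.rfl HEq.rfl ?_
    refine (heq_of_eq ((SMor_coc 𝔟 ρ hobjCoc hmorCoc c0 (LiftDat.can i (𝟙 V))
      (c1 ((φ i).map (𝟙 V))) (LiftDat.can i (𝟙 V)) _).trans
      (SMor_self 𝔟 ρ hsub hobjCoc hmorCoc c0 (LiftDat.can i (𝟙 V)) _))).trans ?_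
    refine ((𝔟 i).mcast_heq rfl rfl HEq.rfl
      (heq_of_eq (rObj_sObj_self 𝔟 ρ hbij hobjCoc c0 i rfl B)).symm
      (heq_of_eq (rObj_sObj_self 𝔟 ρ hbij hobjCoc c0 i rfl B)).symm
      ((𝔟 i).id B)).trans ?_
    refine HEq.trans ?_ (heq_of_eq ((SMor_coc 𝔟 ρ hobjCoc hmorCoc c0
      (LiftDat.idl (c0 ((φ i).obj V)).i (c0 ((φ i).obj V)).V
        (c0 ((φ i).obj V)).e) (c1 (𝟙 ((φ i).obj V))) (LiftDat.idl i V rfl) _).trans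
      (SMor_id 𝔟 ρ hobjCoc c0 (c0 ((φ i).obj V)).i (c0 ((φ i).obj V)).V
        (c0 ((φ i).obj V)).e i V rfl (sObj 𝔟 ρ c0 i B)))).symm
    exact ((𝔟 i).id_congr rfl
      (heq_of_eq (rObj_sObj_self 𝔟 ρ hbij hobjCoc c0 i rfl B))).symm
  map_comp := by
    intro V V' V'' vf vg C B A x y
    refine HEq.trans ?_
      ((Dcat 𝔟 ρ hsub hobjCoc hmorCoc c0 @c1 @c2 h3).Hcast_heq
        ((φ i).map_comp vg vf).symm (Dcomp 𝔟 ρ hobjCoc c0 @c1 @c2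
          (sMap 𝔟 ρ hbij hobjCoc c0 @c1 i vf x)
          (sMap 𝔟 ρ hbij hobjCoc c0 @c1 i vg y))).symm
    refine Dheq_master 𝔟 ρ hsub hobjCoc c0 @c1 rfl rfl
      (heq_of_eq ((φ i).map_comp vg vf)) HEq.rfl HEq.rfl _ _
      (LiftDat.can i (vg ≫ vf))
      (Lift2Dat.cmp ⟨i, V, V', V'', vg, vf, rfl, rfl, rfl, HEq.rfl, HEq.rfl⟩)
      rfl HEq.rfl HEq.rfl HEq.rfl ?_
    refine (heq_of_eq ((SMor_coc 𝔟 ρ hobjCoc hmorCoc c0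
      (LiftDat.can i (vg ≫ vf)) (c1 ((φ i).map (vg ≫ vf)))
      (LiftDat.can i (vg ≫ vf)) _).trans
      (SMor_self 𝔟 ρ hsub hobjCoc hmorCoc c0 (LiftDat.can i (vg ≫ vf)) _))).trans ?_
    refine ((𝔟 i).mcast_heq rfl rfl HEq.rfl
      (heq_of_eq (rObj_sObj_self 𝔟 ρ hbij hobjCoc c0 i rfl C)).symm
      (heq_of_eq (rObj_sObj_self 𝔟 ρ hbij hobjCoc c0 i rfl A)).symm
      ((𝔟 i).comp x y)).trans ?_
    refine HEq.trans ?_ (heq_of_eq (Dcomp_spec 𝔟 ρ hobjCoc hmorCoc c0 @c1 @c2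
      ((φ i).map vg) ((φ i).map vf)
      ⟨i, V, V', V'', vg, vf, rfl, rfl, rfl, HEq.rfl, HEq.rfl⟩
      (sMap 𝔟 ρ hbij hobjCoc c0 @c1 i vf x)
      (sMap 𝔟 ρ hbij hobjCoc c0 @c1 i vg y))).symm
    refine (𝔟 i).comp_congr'_s10 rfl rfl rfl HEq.rfl HEq.rfl
      (heq_of_eq (rObj_sObj_self 𝔟 ρ hbij hobjCoc c0 i rfl C)).symm
      (heq_of_eq (rObj_sObj_self 𝔟 ρ hbij hobjCoc c0 i rfl B)).symm
      (heq_of_eq (rObj_sObj_self 𝔟 ρ hbij hobjCoc c0 i rfl A)).symm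
      ?_ ?_
    · refine ((𝔟 i).mcast_heq rfl rfl HEq.rfl
        (heq_of_eq (rObj_sObj_self 𝔟 ρ hbij hobjCoc c0 i rfl B)).symm
        (heq_of_eq (rObj_sObj_self 𝔟 ρ hbij hobjCoc c0 i rfl A)).symm x).symm.trans
        ?_
      exact (heq_of_eq ((SMor_coc 𝔟 ρ hobjCoc hmorCoc c0 (LiftDat.can i vf)
        (c1 ((φ i).map vf))
        (Lift2Dat.snd ⟨i, V, V', V'', vg, vf, rfl, rfl, rfl, HEq.rfl, HEq.rfl⟩)
        _).trans
        (SMor_self 𝔟 ρ hsub hobjCoc hmorCoc c0 (LiftDat.can i vf) _))).symm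
    · refine ((𝔟 i).mcast_heq rfl rfl HEq.rfl
        (heq_of_eq (rObj_sObj_self 𝔟 ρ hbij hobjCoc c0 i rfl C)).symm
        (heq_of_eq (rObj_sObj_self 𝔟 ρ hbij hobjCoc c0 i rfl B)).symm y).symm.trans
        ?_
      exact (heq_of_eq ((SMor_coc 𝔟 ρ hobjCoc hmorCoc c0 (LiftDat.can i vg)
        (c1 ((φ i).map vg))
        (Lift2Dat.fst ⟨i, V, V', V'', vg, vf, rfl, rfl, rfl, HEq.rfl, HEq.rfl⟩)
        _).trans
        (SMor_self 𝔟 ρ hsub hobjCoc hmorCoc c0 (LiftDat.can i vg) _))).symm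

include hbij hsub hobjCoc hmorCoc in
theorem sMap_compat (i j : ι) {Vl Vl' : 𝒱 i} {Vr Vr' : 𝒱 j}
    (v : Vl ⟶ Vl') (w : Vr ⟶ Vr') (e : (φ i).obj Vl = (φ j).obj Vr)
    (e' : (φ i).obj Vl' = (φ j).obj Vr')
    (c : (φ i).map v = eqToHom e ≫ (φ j).map w ≫ eqToHom e'.symm)
    {B : (𝔟 i).Obj Vl} {B' : (𝔟 i).Obj Vl'} (x : (𝔟 i).Hom v B B') :
    HEq (sMap 𝔟 ρ hbij hobjCoc c0 @c1 j w (tMor 𝔟 ρ i j e e' v w c x))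
      (sMap 𝔟 ρ hbij hobjCoc c0 @c1 i v x) := by
  refine Dheq_master 𝔟 ρ hsub hobjCoc c0 @c1 e.symm e'.symm
    (heq_of_eq_conj e e' c).symm (sObj_compat 𝔟 ρ hbij hobjCoc c0 i j e B)
    (sObj_compat 𝔟 ρ hbij hobjCoc c0 i j e' B') _ _
    (LiftDat.can j w)
    (⟨j, Vr, Vr', w, e.symm, e'.symm, (heq_of_eq_conj e e' c).symm⟩ :
      LiftDat φ ((φ i).map v))
    rfl HEq.rfl HEq.rfl HEq.rfl ?_
  refine (heq_of_eq ((SMor_coc 𝔟 ρ hobjCoc hmorCoc c0 (LiftDat.can j w)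
    (c1 ((φ j).map w)) (LiftDat.can j w) _).trans
    (SMor_self 𝔟 ρ hsub hobjCoc hmorCoc c0 (LiftDat.can j w) _))).trans ?_
  refine ((𝔟 j).mcast_heq rfl rfl HEq.rfl
    (heq_of_eq (rObj_sObj_self 𝔟 ρ hbij hobjCoc c0 j rfl
      (tObj 𝔟 ρ i j e B))).symm
    (heq_of_eq (rObj_sObj_self 𝔟 ρ hbij hobjCoc c0 j rfl
      (tObj 𝔟 ρ i j e' B'))).symm
    (tMor 𝔟 ρ i j e e' v w c x)).trans ?_
  refine HEq.trans ?_ (heq_of_eq (SMor_coc 𝔟 ρ hobjCoc hmorCoc c0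
    (LiftDat.can i v) (c1 ((φ i).map v))
    (⟨j, Vr, Vr', w, e.symm, e'.symm, (heq_of_eq_conj e e' c).symm⟩ :
      LiftDat φ ((φ i).map v)) _)).symm
  refine HEq.trans ?_ (SMor_tMor 𝔟 ρ c0 hobjCoc (LiftDat.can i v)
    (⟨j, Vr, Vr', w, e.symm, e'.symm, (heq_of_eq_conj e e' c).symm⟩ :
      LiftDat φ ((φ i).map v)) _).symm
  exact (ρ i j).map_congr'' rfl rfl HEq.rfl
    (heq_of_eq (rObj_sObj_self 𝔟 ρ hbij hobjCoc c0 i rfl B)).symm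
    (heq_of_eq (rObj_sObj_self 𝔟 ρ hbij hobjCoc c0 i rfl B')).symm
    ((𝔟 i).mcast_heq rfl rfl HEq.rfl
      (heq_of_eq (rObj_sObj_self 𝔟 ρ hbij hobjCoc c0 i rfl B)).symm
      (heq_of_eq (rObj_sObj_self 𝔟 ρ hbij hobjCoc c0 i rfl B')).symm x).symm

end Part2

/-- Fix `n ∈ ℕ ∪ {∞}` and endow `Cat` with the pretopology of `n`-covers.  For an
`n`-cover `(φᵢ : 𝒱ᵢ ⥤ 𝒰)`, restriction of map-graded categories along the cover
defines a comparison functor from `Map(𝒰)` to descent data of map-graded categories.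
If `n ≥ 2` this comparison functor is fully faithful (morphisms glue uniquely):
`Map` is a prestack over `Cat`; if `n ≥ 3` it is moreover an equivalence (every descent
datum is effective): `Map` is a stack over `Cat`. -/
theorem statement10 (k : Type u) [CommRing k] (n : ℕ∞) {𝒰 : Type u} [Category.{u} 𝒰]
    {ι : Type u} (𝒱 : ι → Type u) [∀ i, Category.{u} (𝒱 i)] (φ : ∀ i, 𝒱 i ⥤ 𝒰)
    (hcov : ∀ m : ℕ, (m : ℕ∞) ≤ n → ∀ s : NerveTot 𝒰 m,
      ∃ i, ∃ t : NerveTot (𝒱 i) m, NerveTot.map (φ i) t = s) :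
    -- if `n ≥ 2`, `Map` is a prestack over `Cat`: morphisms glue uniquely
    ((2 ≤ n) → ∀ (𝔟 𝔞 : GradedCat k 𝒰)
      (H : ∀ i, GradedFunctor k (𝟭 (𝒱 i)) (𝔟.restrict (φ i)) (𝔞.restrict (φ i))),
      -- compatibility of the family over the pairwise pullbacks
      (∀ (i j : ι) (P : CatPB (φ i) (φ j)) (B₁ : 𝔟.Obj ((φ i).obj P.left))
        (B₂ : 𝔟.Obj ((φ j).obj P.right)), HEq B₁ B₂ →
        HEq ((H i).obj (V := P.left) B₁) ((H j).obj (V := P.right) B₂)) →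
      (∀ (i j : ι) (P Q : CatPB (φ i) (φ j)) (f : P ⟶ Q)
        (B₁ : 𝔟.Obj ((φ i).obj P.left)) (B₁' : 𝔟.Obj ((φ i).obj Q.left))
        (B₂ : 𝔟.Obj ((φ j).obj P.right)) (B₂' : 𝔟.Obj ((φ j).obj Q.right))
        (x : 𝔟.Hom ((φ i).map f.1.1) B₁ B₁') (y : 𝔟.Hom ((φ j).map f.1.2) B₂ B₂'),
        HEq B₁ B₂ → HEq B₁' B₂' → HEq x y →
        HEq ((H i).map f.1.1 x) ((H j).map f.1.2 y)) →
      ∃! G : GradedFunctor k (𝟭 𝒰) 𝔟 𝔞, ∀ i, restrictAlong (φ i) G = H i) ∧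
    -- if `n ≥ 3`, `Map` is a stack over `Cat`: every descent datum is effective
    ((3 ≤ n) → ∀ (𝔟 : ∀ i, GradedCat k (𝒱 i))
      (ρ : ∀ i j, GradedFunctor k (𝟭 (CatPB (φ i) (φ j)))
        ((𝔟 i).restrict (pbFstF (φ i) (φ j))) ((𝔟 j).restrict (pbSndF (φ i) (φ j)))),
      -- the `ρᵢⱼ` are isomorphisms
      (∀ i j (P : CatPB (φ i) (φ j)),
        Function.Bijective fun B : (𝔟 i).Obj P.left => (ρ i j).obj (V := P) B) →
      (∀ i j, (ρ i j).Subcartesian) →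
      -- cocycle condition on triple pullbacks, on objects
      (∀ (i j l : ι) (V₁ : 𝒱 i) (V₂ : 𝒱 j) (V₃ : 𝒱 l)
        (h₁₂ : (φ i).obj V₁ = (φ j).obj V₂) (h₂₃ : (φ j).obj V₂ = (φ l).obj V₃)
        (B : (𝔟 i).Obj V₁),
        (ρ j l).obj (V := ⟨V₂, V₃, h₂₃⟩) ((ρ i j).obj (V := ⟨V₁, V₂, h₁₂⟩) B) =
          (ρ i l).obj (V := ⟨V₁, V₃, h₁₂.trans h₂₃⟩) B) →
      -- cocycle condition on triple pullbacks, on graded morphisms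
      (∀ (i j l : ι) (V₁ V₁' : 𝒱 i) (V₂ V₂' : 𝒱 j) (V₃ V₃' : 𝒱 l)
        (h₁₂ : (φ i).obj V₁ = (φ j).obj V₂) (h₂₃ : (φ j).obj V₂ = (φ l).obj V₃)
        (h₁₂' : (φ i).obj V₁' = (φ j).obj V₂') (h₂₃' : (φ j).obj V₂' = (φ l).obj V₃')
        (v₁ : V₁ ⟶ V₁') (v₂ : V₂ ⟶ V₂') (v₃ : V₃ ⟶ V₃')
        (c₁₂ : (φ i).map v₁ = eqToHom h₁₂ ≫ (φ j).map v₂ ≫ eqToHom h₁₂'.symm)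
        (c₂₃ : (φ j).map v₂ = eqToHom h₂₃ ≫ (φ l).map v₃ ≫ eqToHom h₂₃'.symm)
        (c₁₃ : (φ i).map v₁ = eqToHom (h₁₂.trans h₂₃) ≫ (φ l).map v₃ ≫
          eqToHom ((h₁₂'.trans h₂₃').symm))
        (B : (𝔟 i).Obj V₁) (B' : (𝔟 i).Obj V₁') (x : (𝔟 i).Hom v₁ B B'),
        HEq ((ρ j l).map (V := ⟨V₂, V₃, h₂₃⟩) (V' := ⟨V₂', V₃', h₂₃'⟩)
            (⟨(v₂, v₃), c₂₃⟩ : (⟨V₂, V₃, h₂₃⟩ : CatPB (φ j) (φ l)) ⟶ ⟨V₂', V₃', h₂₃'⟩)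
            ((ρ i j).map (V := ⟨V₁, V₂, h₁₂⟩) (V' := ⟨V₁', V₂', h₁₂'⟩)
              (⟨(v₁, v₂), c₁₂⟩ : (⟨V₁, V₂, h₁₂⟩ : CatPB (φ i) (φ j)) ⟶ ⟨V₁', V₂', h₁₂'⟩)
              x))
          ((ρ i l).map (V := ⟨V₁, V₃, h₁₂.trans h₂₃⟩) (V' := ⟨V₁', V₃', h₁₂'.trans h₂₃'⟩)
            (⟨(v₁, v₃), c₁₃⟩ :
              (⟨V₁, V₃, h₁₂.trans h₂₃⟩ : CatPB (φ i) (φ l)) ⟶ ⟨V₁', V₃', h₁₂'.trans h₂₃'⟩)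
            x)) →
      -- the descent datum is effective
      ∃ (𝔟₀ : GradedCat k 𝒰)
        (σ : ∀ i, GradedFunctor k (𝟭 (𝒱 i)) (𝔟 i) (𝔟₀.restrict (φ i))),
        (∀ i, (∀ V : 𝒱 i, Function.Bijective fun B : (𝔟 i).Obj V => (σ i).obj B) ∧
          (σ i).Subcartesian) ∧
        (∀ (i j : ι) (P : CatPB (φ i) (φ j)) (B : (𝔟 i).Obj P.left),
          HEq ((σ j).obj ((ρ i j).obj (V := P) B)) ((σ i).obj B)) ∧
        (∀ (i j : ι) (P Q : CatPB (φ i) (φ j)) (f : P ⟶ Q) (B : (𝔟 i).Obj P.left)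
          (B' : (𝔟 i).Obj Q.left) (x : (𝔟 i).Hom f.1.1 B B'),
          HEq ((σ j).map f.1.2 ((ρ i j).map f x)) ((σ i).map f.1.1 x))) := by
  constructor
  · intro hn 𝔟 𝔞 H hco hcm
    have h0 := hcov 0 (le_trans (by norm_num) hn)
    have h1 := hcov 1 (le_trans (by norm_num) hn)
    have h2 := hcov 2 (le_trans (by norm_num) hn)
    exact ⟨Gfun 𝔟 𝔞 H (fun U => ObjDat.mk' (lift0 h0 U))
        (fun {U U'} f => LiftDat.mk' (lift1 h1 f)) hco hcm h2,
      fun i => Gfun_restrict 𝔟 𝔞 H (fun U => ObjDat.mk' (lift0 h0 U))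
        (fun {U U'} f => LiftDat.mk' (lift1 h1 f)) hco hcm h2 i,
      fun G' hG' => Gfun_unique 𝔟 𝔞 H (fun U => ObjDat.mk' (lift0 h0 U))
        (fun {U U'} f => LiftDat.mk' (lift1 h1 f)) hco hcm h2 G' hG'⟩
  · intro hn 𝔟 ρ hbij hsub hobjCoc hmorCoc
    have h0 := hcov 0 (le_trans (by norm_num) hn)
    have h1 := hcov 1 (le_trans (by norm_num) hn)
    have h2 := hcov 2 (le_trans (by norm_num) hn)
    have h3 := hcov 3 (le_trans (by norm_num) hn)
    let c0' : ∀ U : 𝒰, ObjDat φ U := fun U => ObjDat.mk' (lift0 h0 U)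
    let c1' : ∀ {U U' : 𝒰} (f : U ⟶ U'), LiftDat φ f :=
      fun {U U'} f => LiftDat.mk' (lift1 h1 f)
    let c2' : ∀ {U U' U'' : 𝒰} (g : U ⟶ U') (f : U' ⟶ U''), Lift2Dat φ g f :=
      fun {U U' U''} g f => Lift2Dat.mk' (lift2 h2 g f)
    refine ⟨Dcat 𝔟 ρ hsub hobjCoc hmorCoc c0' @c1' @c2' h3,
      fun i => Sfun 𝔟 ρ hbij hsub hobjCoc hmorCoc c0' @c1' @c2' h3 i, ?_, ?_, ?_⟩
    · intro i
      refine ⟨fun V => sObj_bij 𝔟 ρ hbij c0' i V, ?_⟩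
      intro V V' v B B'
      exact sMap_bij 𝔟 ρ hbij hsub hobjCoc c0' @c1' i v B B'
    · intro i j P B
      exact sObj_compat 𝔟 ρ hbij hobjCoc c0' i j P.eq B
    · intro i j P Q f B B' x
      exact sMap_compat 𝔟 ρ hbij hsub hobjCoc hmorCoc c0' @c1' i j f.1.1 f.1.2
        P.eq Q.eq f.2 x

end MapGr
end
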